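/- arXiv:math/0609150 — 4 statements merged into one kernel-verified Lean document; each statement's English description precedes it below -/
import Mathlib

section
/- Let R = k[x_1,…,x_r] be a standard graded polynomial ring over a field k of characteristic zero, let I ⊆ R be a homogeneous ideal with A = R/I artinian, and let t ≥ 1 be an integer such that dim_k (R/I)_t ≤ t. Then there exists a linear form L ∈ R_1 such that dim_k (R/(I + (L)))_t = 0. -/
open MvPolynomial Finset

/-- The degree-`i` graded piece of `R/I` (`R = k[x_1,…,x_r]` standard graded),
namely the image of the space of homogeneous polynomials of degree `i`
under the quotient map. -/
noncomputable def quotPiece (k : Type) [Field k] {r : ℕ}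
    (I : Ideal (MvPolynomial (Fin r) k)) (i : ℕ) :
    Submodule k (MvPolynomial (Fin r) k ⧸ I) :=
  (homogeneousSubmodule (Fin r) k i).map (Ideal.Quotient.mkₐ k I).toLinearMap

/-- The Hilbert function of `R/I`: `h_i = dim_k (R/I)_i`. -/
noncomputable def hilb (k : Type) [Field k] {r : ℕ}
    (I : Ideal (MvPolynomial (Fin r) k)) (i : ℕ) : ℕ :=
  Module.finrank k (quotPiece k I i)

/-- `I` is a homogeneous ideal: it contains all homogeneous components of its
elements. -/
def IsHomogIdeal {k : Type} [Field k] {r : ℕ}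
    (I : Ideal (MvPolynomial (Fin r) k)) : Prop :=
  ∀ f ∈ I, ∀ n : ℕ, (homogeneousComponent n f : MvPolynomial (Fin r) k) ∈ I

/-- `A = R/I` is artinian: the graded pieces vanish in all high degrees. -/
def ArtinianQuot (k : Type) [Field k] {r : ℕ}
    (I : Ideal (MvPolynomial (Fin r) k)) : Prop :=
  ∃ N : ℕ, ∀ i ≥ N, hilb k I i = 0

/-- The Weak Lefschetz Property: there is a linear form `L` such that, for
every `i ≥ 0`, multiplication by `L` from the degree-`i` piece of `R/I` to the
degree-`(i+1)` piece has maximal rank, i.e. is injective or surjective. -/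
def WLP (k : Type) [Field k] {r : ℕ}
    (I : Ideal (MvPolynomial (Fin r) k)) : Prop :=
  ∃ L ∈ homogeneousSubmodule (Fin r) k 1, ∀ i : ℕ,
    (∀ x ∈ quotPiece k I i, Ideal.Quotient.mk I L * x = 0 → x = 0) ∨
    (∀ y ∈ quotPiece k I (i + 1), ∃ x ∈ quotPiece k I i, Ideal.Quotient.mk I L * x = y)

/-- `c` (on the indices `j ≤ m ≤ i`) records the `i`-binomial expansion of `n`:
`n = C(c i, i) + C(c (i-1), i-1) + ⋯ + C(c j, j)` where
`c i > c (i-1) > ⋯ > c j ≥ j ≥ 1`. -/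
def IsBinExp (n i j : ℕ) (c : ℕ → ℕ) : Prop :=
  1 ≤ j ∧ j ≤ i ∧ j ≤ c j ∧ StrictMonoOn c (Set.Icc j i) ∧
  n = ∑ m ∈ Finset.Icc j i, (c m).choose m


open Module Submodule

variable {k : Type} [Field k] {r : ℕ}

local notation "R" => MvPolynomial (Fin r) k
local notation "H" n => homogeneousSubmodule (Fin r) k n

noncomputable instance Hfd (n : ℕ) : FiniteDimensional k ↥(H n) := by
  have hle : (H n) ≤ restrictTotalDegree (Fin r) k n := by
    intro p hp
    rw [mem_restrictTotalDegree]
    exact ((mem_homogeneousSubmodule n p).mp hp).totalDegree_le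
  have : Module.Finite k (restrictTotalDegree (Fin r) k n) := inferInstance
  exact Submodule.finiteDimensional_of_le hle

lemma deg_add (a b : Fin r →₀ ℕ) :
    Finsupp.degree (a + b) = Finsupp.degree a + Finsupp.degree b := by
  simp only [Finsupp.degree_eq_weight_one, map_add]

lemma deg_single (i : Fin r) (m : ℕ) : Finsupp.degree (Finsupp.single i m) = m := by
  rw [Finsupp.degree_eq_weight_one, Finsupp.weight_apply, Finsupp.sum_single_index] <;> simp

lemma H_le_span_monomials (n : ℕ) :
    (H n) ≤ span k ((fun d : Fin r →₀ ℕ => (monomial d (1:k) : R)) ''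
      {d | Finsupp.degree d = n}) := by
  intro p hp
  rw [mem_homogeneousSubmodule] at hp
  rw [p.as_sum]
  refine Submodule.sum_mem _ fun d hd => ?_
  have hdeg : Finsupp.degree d = n := by
    have := hp (mem_support_iff.mp hd)
    rw [Finsupp.degree_eq_weight_one]; exact this
  have h2 : (monomial d (coeff d p) : R) = (coeff d p) • monomial d 1 := by
    rw [smul_monomial, smul_eq_mul, mul_one]
  rw [h2]
  exact Submodule.smul_mem _ _ (Submodule.subset_span ⟨d, hdeg, rfl⟩)

lemma monomial_factor {d : Fin r →₀ ℕ} {n : ℕ} (hd : Finsupp.degree d = n + 1) :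
    ∃ (i : Fin r) (d' : Fin r →₀ ℕ), Finsupp.degree d' = n ∧
      (monomial d (1:k) : R) = X i * monomial d' 1 := by
  have hd0 : d ≠ 0 := by
    intro h; rw [h, map_zero] at hd; omega
  obtain ⟨i, hi⟩ : ∃ i, d i ≠ 0 := by
    by_contra h; push_neg at h; exact hd0 (Finsupp.ext fun a => h a)
  have hsplit : d = Finsupp.single i 1 + (d - Finsupp.single i 1) := by
    ext a
    simp only [Finsupp.add_apply, Finsupp.tsub_apply, Finsupp.single_apply]
    by_cases hai : i = a
    · subst hai; simp only [eq_self_iff_true, if_true]; omega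
    · simp [hai]
  refine ⟨i, d - Finsupp.single i 1, ?_, ?_⟩
  · have h1 := hd
    rw [hsplit, deg_add, deg_single] at h1
    omega
  · rw [X, monomial_mul, one_mul, ← hsplit]

noncomputable def Lc (c : Fin r → k) : R := ∑ i, c i • X i

lemma Lc_mem (c : Fin r → k) : Lc c ∈ (H 1) :=
  Submodule.sum_mem _ fun i _ => Submodule.smul_mem _ _
    ((mem_homogeneousSubmodule 1 _).mpr (isHomogeneous_X k i))

lemma exists_Lc {u : R} (hu : u ∈ (H 1)) : ∃ c : Fin r → k, u = Lc c := by
  have h1 : u ∈ span k (Set.range (X : Fin r → R)) := by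
    refine Submodule.span_mono ?_ (H_le_span_monomials 1 hu)
    rintro x ⟨d, hd, rfl⟩
    obtain ⟨i, d', hd', heq⟩ := monomial_factor (k := k) (n := 0) hd
    have hd'0 : d' = 0 := (Finsupp.degree_eq_zero_iff d').mp hd'
    show (monomial d (1:k) : R) ∈ Set.range X
    rw [heq, hd'0]
    simpa [monomial_zero', C_1] using Set.mem_range_self i
  rw [mem_span_range_iff_exists_fun] at h1
  obtain ⟨c, hc⟩ := h1
  exact ⟨c, by rw [← hc, Lc]⟩

lemma Lc_mul (c : Fin r → k) (f : R) : Lc c * f = ∑ i, c i • (X i * f) := by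
  rw [Lc, Finset.sum_mul]
  exact Finset.sum_congr rfl fun i _ => smul_mul_assoc _ _ _

lemma map_mulLeft_le {u : R} (hu : u ∈ (H 1)) (n : ℕ) :
    (H n).map (LinearMap.mulLeft k u) ≤ (H (n+1)) := by
  rintro x ⟨y, hy, rfl⟩
  simp only [LinearMap.mulLeft_apply]
  have h2 := ((mem_homogeneousSubmodule 1 u).mp hu).mul ((mem_homogeneousSubmodule n y).mp hy)
  rw [add_comm] at h2
  exact (mem_homogeneousSubmodule _ _).mpr h2

lemma X_mul_mem {f : R} (n : ℕ) (i : Fin r) (hf : f ∈ (H n)) : X i * f ∈ (H (n+1)) :=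
 by
  have h2 := (isHomogeneous_X k i).mul ((mem_homogeneousSubmodule n f).mp hf)
  rw [add_comm] at h2
  exact (mem_homogeneousSubmodule _ _).mpr h2

-- a proper submodule of a f.d. space admits a nonzero functional vanishing on it
lemma exists_functional {E : Type} [AddCommGroup E] [Module k E] [FiniteDimensional k E]
    {p : Submodule k E} (hp : p ≠ ⊤) :
    ∃ φ : Module.Dual k E, (∀ x ∈ p, φ x = 0) ∧ φ ≠ 0 := by
  have : Nontrivial (E ⧸ p) := Submodule.Quotient.nontrivial_iff.mpr hp
  obtain ⟨y, hy⟩ := exists_ne (0 : E ⧸ p)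
  obtain ⟨ψ, hψ⟩ := (Module.forall_dual_apply_eq_zero_iff k y).not.mpr hy |> not_forall.mp
  refine ⟨ψ.comp p.mkQ, fun x hx => ?_, fun h0 => ?_⟩
  · simp [Submodule.Quotient.mk_eq_zero _ |>.mpr hx, (Submodule.Quotient.mk_eq_zero p).mpr hx]
  · obtain ⟨z, rfl⟩ := Submodule.mkQ_surjective p y
    have := congrFun (congrArg DFunLike.coe h0) z
    exact hψ this
lemma indep_of_det {ρ : ℕ} (v : Fin ρ → R) (μ : Fin ρ → (Fin r →₀ ℕ))
    (h : (Matrix.of fun a b => coeff (μ a) (v b)).det ≠ 0) : LinearIndependent k v := by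
  rw [Fintype.linearIndependent_iff]
  intro g hg
  have hmv : (Matrix.of fun a b => coeff (μ a) (v b)).mulVec g = 0 := by
    funext a
    simp only [Matrix.mulVec, dotProduct, Matrix.of_apply]
    have h1 : (coeff (μ a)) (∑ b, g b • v b) = 0 := by rw [hg]; exact coeff_zero _
    have h2 : ∑ x, coeff (μ a) (v x) * g x = 0 := by
      rw [← h1, MvPolynomial.coeff_sum]
      exact Finset.sum_congr rfl fun b _ => by rw [coeff_smul, smul_eq_mul, mul_comm]
    simpa using h2
  have := Matrix.eq_zero_of_mulVec_eq_zero h hmv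
  exact fun i => congrFun this i

lemma exists_coeff_det_ne_zero {ρ : ℕ} {w : Fin ρ → R} (hw : LinearIndependent k w) :
    ∃ μ : Fin ρ → (Fin r →₀ ℕ),
      (Matrix.of fun a b => coeff (μ a) (w b)).det ≠ 0 := by
  classical
  set E := span k (Set.range w) with hE
  have : FiniteDimensional k E := FiniteDimensional.span_of_finite k (Set.finite_range w)
  let bw : Basis (Fin ρ) k E := Basis.span hw
  let fd : (Fin r →₀ ℕ) → Module.Dual k E := fun d => (lcoeff k d).comp E.subtype
  -- the coefficient functionals span the dual
  have hspan : span k (Set.range fd) = ⊤ := by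
    by_contra hne
    obtain ⟨ξ, hξ0, hξne⟩ := exists_functional (k := k) hne
    set x := (Module.evalEquiv k E).symm ξ with hx
    have hξ : Module.evalEquiv k E x = ξ := by rw [hx, LinearEquiv.apply_symm_apply]
    have hcoeff : ∀ d, coeff d (x : R) = 0 := by
      intro d
      have : ξ (fd d) = 0 := hξ0 _ (subset_span (Set.mem_range_self d))
      rw [← hξ] at this
      simpa [Module.evalEquiv_apply, fd] using this
    have hx0 : x = 0 := by
      have : (x : R) = 0 := by ext d; exact hcoeff d
      exact Subtype.ext this
    rw [hx0] at hξ
    simp at hξ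
    exact hξne hξ.symm
  obtain ⟨bs, hbsub, hbspan, hbind⟩ := exists_linearIndependent k (Set.range fd)
  rw [hspan] at hbspan
  let φb : Basis ↥bs k (Module.Dual k E) := Basis.mk hbind (by
    rw [Subtype.range_coe_subtype, Set.setOf_mem_eq, hbspan])
  let e : ↥bs ≃ Fin ρ := φb.indexEquiv bw.dualBasis
  choose μf hμf using fun y : ↥bs => hbsub y.2
  refine ⟨fun a => μf (e.symm a), ?_⟩
  have hφ : ∀ a, fd (μf (e.symm a)) = ↑(e.symm a) := fun a => hμf (e.symm a)
  -- the linear map given by the chosen functionals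
  let α : E →ₗ[k] (Fin ρ → k) := LinearMap.pi (fun a => ((e.symm a : ↥bs) : Module.Dual k E))
  have hαinj : Function.Injective α := by
    rw [← LinearMap.ker_eq_bot, Submodule.eq_bot_iff]
    intro x hx
    have hy : ∀ y : ↥bs, (y : Module.Dual k E) x = 0 := by
      intro y
      have := congrFun (show α x = 0 from hx) (e y)
      simpa [α, Equiv.symm_apply_apply] using this
    have hall : ∀ f : Module.Dual k E, f x = 0 := by
      intro f
      have hf : f ∈ span k bs := by rw [hbspan]; trivial
      induction hf using Submodule.span_induction with
      | mem f hf => exact hy ⟨f, hf⟩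
      | zero => simp
      | add f g _ _ hf hg => simp [hf, hg]
      | smul c f _ hf => simp [hf]
    exact (Module.forall_dual_apply_eq_zero_iff k x).mp hall
  let γ : (Fin ρ → k) →ₗ[k] (Fin ρ → k) := α ∘ₗ (bw.equivFun.symm : (Fin ρ → k) ≃ₗ[k] E).toLinearMap
  have hγinj : Function.Injective γ := by
    apply hαinj.comp
    exact bw.equivFun.symm.injective
  have hγbij : Function.Bijective γ :=
    ⟨hγinj, (LinearMap.injective_iff_surjective).mp hγinj⟩
  have hdet : IsUnit (LinearMap.det γ) := by
    have : (LinearEquiv.ofBijective γ hγbij : (Fin ρ → k) →ₗ[k] (Fin ρ → k)) = γ := rfl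
    rw [← this]
    exact LinearEquiv.isUnit_det' _
  have hmat : (Matrix.of fun a b => coeff (μf (e.symm a)) (w b)) = LinearMap.toMatrix' γ := by
    ext a b
    rw [LinearMap.toMatrix'_apply]
    have h1 : (fun j => if j = b then (1:k) else 0) = Pi.single b 1 := by
      funext j; rw [Pi.single_apply]
    have h2 : bw.equivFun.symm (Pi.single b 1) = bw b := Basis.equivFun_symm_single bw b
    simp only [γ, LinearMap.comp_apply, LinearEquiv.coe_coe, h2]
    have h3 : α (bw b) a = ((e.symm a : ↥bs) : Module.Dual k E) (bw b) := rfl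
    rw [h3, ← hφ a]
    show coeff (μf (e.symm a)) (w b) = coeff (μf (e.symm a)) ((bw b : E) : MvPolynomial (Fin r) k)
    rw [show ((bw b : E) : MvPolynomial (Fin r) k) = w b from Basis.coe_span_apply hw b]
  rw [hmat, LinearMap.det_toMatrix']
  exact hdet.ne_zero

lemma exists_indep_subfamily {ι' : Type} [Fintype ι'] (v : ι' → R) {ρ : ℕ}
    (h : ρ ≤ finrank k (span k (Set.range v))) :
    ∃ ι : Fin ρ → ι', LinearIndependent k (v ∘ ι) := by
  classical
  obtain ⟨s, hsub, hspan, hind⟩ := exists_linearIndependent k (Set.range v)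
  have hsfin : s.Finite := (Set.finite_range v).subset hsub
  have : Fintype s := hsfin.fintype
  have hcard : finrank k (span k s) = s.toFinset.card := by
    rw [finrank_span_set_eq_card hind]
  have hρ : ρ ≤ Fintype.card s := by
    rw [← Set.toFinset_card, ← hcard, hspan]; exact h
  let emb : Fin ρ → s := fun a => (Fintype.equivFin s).symm (Fin.castLE hρ a)
  have hembinj : Function.Injective emb :=
    (Fintype.equivFin s).symm.injective.comp (Fin.castLE_injective hρ)
  have ha : ∀ a : Fin ρ, ∃ i, v i = ↑(emb a) := fun a => hsub (emb a).2
  choose ι hι using ha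
  refine ⟨ι, ?_⟩
  have : v ∘ ι = fun a => ↑(emb a) := funext fun a => hι a
  rw [this]
  exact hind.comp emb hembinj

/-- The entries, as polynomials in the coefficients of the linear form. -/
noncomputable def Pent {p q : ℕ} (b : Fin p → R) (m : Fin q → R)
    (d : Fin r →₀ ℕ) : Fin p ⊕ Fin q → MvPolynomial (Fin r) k
  | .inl a => C (coeff d (b a))
  | .inr j => ∑ i, C (coeff d (X i * m j)) * X i

lemma eval_Pent {p q : ℕ} (b : Fin p → R) (m : Fin q → R) (d : Fin r →₀ ℕ)
    (c : Fin r → k) (idx : Fin p ⊕ Fin q) :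
    eval c (Pent b m d idx) = coeff d (Sum.elim b (fun j => Lc c * m j) idx) := by
  cases idx with
  | inl a => simp [Pent]
  | inr j =>
    simp only [Pent, Sum.elim_inr, map_sum, eval_mul, eval_C, eval_X]
    rw [Lc_mul, MvPolynomial.coeff_sum]
    exact Finset.sum_congr rfl fun i _ => by rw [coeff_smul, smul_eq_mul, mul_comm]

lemma certGeneric {p q ρ : ℕ} (b : Fin p → R) (m : Fin q → R) (c₀ : Fin r → k)
    (h : ρ ≤ finrank k (span k (Set.range (Sum.elim b (fun j => Lc c₀ * m j))))) :
    ∃ P : MvPolynomial (Fin r) k, P ≠ 0 ∧ ∀ c : Fin r → k, eval c P ≠ 0 →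
      ρ ≤ finrank k (span k (Set.range (Sum.elim b (fun j => Lc c * m j)))) := by
  classical
  set fam : (Fin r → k) → (Fin p ⊕ Fin q) → MvPolynomial (Fin r) k :=
    fun c => Sum.elim b (fun j => Lc c * m j) with hfam
  obtain ⟨ι, hι⟩ := exists_indep_subfamily (fam c₀) h
  obtain ⟨μ, hdet⟩ := exists_coeff_det_ne_zero hι
  set A : Matrix (Fin ρ) (Fin ρ) (MvPolynomial (Fin r) k) :=
    Matrix.of fun a b' => Pent b m (μ a) (ι b') with hA
  have hevalA : ∀ (c : Fin r → k) a b', eval c (A a b') = coeff (μ a) (fam c (ι b')) :=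
    fun c a b' => eval_Pent b m (μ a) c (ι b')
  have hmap : ∀ c : Fin r → k,
      A.map (eval c) = Matrix.of fun a b' => coeff (μ a) ((fam c ∘ ι) b') := by
    intro c; ext a b'; rw [Matrix.map_apply]; exact hevalA c a b'
  have hevaldet : ∀ c : Fin r → k,
      eval c A.det = (Matrix.of fun a b' => coeff (μ a) ((fam c ∘ ι) b')).det := by
    intro c
    rw [← hmap c]
    exact (RingHom.map_det (eval c) A)
  refine ⟨A.det, ?_, ?_⟩
  · intro h0
    apply hdet
    rw [← hevaldet c₀, h0, map_zero]
  · intro c hc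
    rw [hevaldet c] at hc
    have hind := indep_of_det (fam c ∘ ι) μ hc
    have h1 : finrank k (span k (Set.range (fam c ∘ ι))) = ρ := by
      rw [finrank_span_eq_card hind, Fintype.card_fin]
    have h2 : span k (Set.range (fam c ∘ ι)) ≤ span k (Set.range (fam c)) :=
      span_mono (Set.range_comp_subset_range _ _)
    have : Module.Finite k (span k (Set.range (fam c))) :=
      FiniteDimensional.span_of_finite k (Set.finite_range _)
    calc ρ = finrank k (span k (Set.range (fam c ∘ ι))) := h1.symm
      _ ≤ finrank k (span k (Set.range (fam c))) := Submodule.finrank_mono h2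

lemma span_elim {p q : ℕ} (b : Fin p → R) (m : Fin q → R) (u : R) :
    span k (Set.range (Sum.elim b (fun j => u * m j))) =
      span k (Set.range b) ⊔ (span k (Set.range m)).map (LinearMap.mulLeft k u) := by
  rw [Set.Sum.elim_range, Submodule.span_union]
  congr 1
  have : (fun j => u * m j) = (LinearMap.mulLeft k u) ∘ m := by
    funext j; simp [LinearMap.mulLeft_apply]
  rw [this, Set.range_comp, Submodule.span_image]

lemma exists_fin_span (V₀ : Submodule k R) [FiniteDimensional k V₀] :
    ∃ (p : ℕ) (b : Fin p → R), span k (Set.range b) = V₀ := by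
  refine ⟨finrank k V₀, fun i => ↑(Module.finBasis k V₀ i), ?_⟩
  have : (fun i => ↑(Module.finBasis k V₀ i)) = V₀.subtype ∘ (Module.finBasis k V₀) := rfl
  rw [this, Set.range_comp, Submodule.span_image, Basis.span_eq, Submodule.map_top,
    Submodule.range_subtype]

lemma keyP_base (V : Submodule k R) (hV : V ≤ (H 1))
    (hcodim : finrank k ↥(H 1) ≤ finrank k V + 1) :
    ∃ L ∈ (H 1), (H 1) ≤ V ⊔ (H 0).map (LinearMap.mulLeft k L) := by
  haveI : FiniteDimensional k V := Submodule.finiteDimensional_of_le hV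
  by_cases hle : (H 1) ≤ V
  · exact ⟨0, zero_mem _, le_trans hle le_sup_left⟩
  · obtain ⟨u, hu1, huV⟩ := SetLike.not_le_iff_exists.mp hle
    refine ⟨u, hu1, ?_⟩
    have hspan : span k {u} ≤ (H 0).map (LinearMap.mulLeft k u) := by
      rw [Submodule.span_singleton_le_iff_mem]
      exact ⟨1, (mem_homogeneousSubmodule 0 1).mpr (isHomogeneous_one _ _), mul_one u⟩
    have hVu : V ⊔ span k {u} = (H 1) := by
      apply Submodule.eq_of_le_of_finrank_le
      · exact sup_le hV ((Submodule.span_singleton_le_iff_mem _ _).mpr hu1)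
      · have hinf : V ⊓ span k {u} = ⊥ := by
          rw [Submodule.eq_bot_iff]
          rintro x ⟨hxV, hxu⟩
          obtain ⟨a, rfl⟩ := Submodule.mem_span_singleton.mp hxu
          by_cases ha : a = 0
          · rw [ha, zero_smul]
          · refine absurd ?_ huV
            have h2 := V.smul_mem a⁻¹ hxV
            rwa [smul_smul, inv_mul_cancel₀ ha, one_smul] at h2
        have hsum := Submodule.finrank_sup_add_finrank_inf_eq V (span k {u})
        rw [hinf, finrank_bot, add_zero,
          finrank_span_singleton (show u ≠ 0 from fun h0 => huV (by rw [h0]; exact V.zero_mem))] at hsum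
        omega
    calc (H 1) = V ⊔ span k {u} := hVu.symm
      _ ≤ V ⊔ (H 0).map (LinearMap.mulLeft k u) := sup_le_sup_left hspan _

variable [Infinite k]

lemma exists_eval_ne {P : MvPolynomial (Fin r) k} (hP : P ≠ 0) : ∃ c, eval c P ≠ 0 := by
  by_contra h
  push_neg at h
  exact hP (MvPolynomial.funext fun c => by rw [h c, map_zero])

lemma fd_of_le_H {n : ℕ} {W : Submodule k R} (hW : W ≤ (H n)) : FiniteDimensional k W :=
  Submodule.finiteDimensional_of_le hW

/-- codimension bound for the colon-type space `V' = H (n+1) ⊓ (mulLeft u)⁻¹ V`. -/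
lemma codim_colon {n : ℕ} {V : Submodule k R} (hV : V ≤ (H (n+2)))
    {u : R} (hu1 : u ∈ (H 1)) {σ N : ℕ}
    (hN : N = finrank k ↥(H (n+2)))
    (hS : finrank k ↥(V ⊔ (H (n+1)).map (LinearMap.mulLeft k u)) = σ)
    (hσlt : σ < N) (hcodim : N ≤ finrank k V + (n+2)) :
    finrank k ↥(H (n+1)) ≤
      finrank k ↥((H (n+1)) ⊓ Submodule.comap (LinearMap.mulLeft k u) V) + (n+1) := by
  haveI : FiniteDimensional k V := fd_of_le_H hV
  set V' : Submodule k R := (H (n+1)) ⊓ Submodule.comap (LinearMap.mulLeft k u) V with hV'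
  haveI : FiniteDimensional k V' := fd_of_le_H (inf_le_left : V' ≤ (H (n+1)))
  by_cases hu : u = 0
  · have hV'eq : V' = (H (n+1)) := by
      rw [hV']
      have : Submodule.comap (LinearMap.mulLeft k u) V = ⊤ := by
        rw [eq_top_iff]
        intro x _
        simp only [Submodule.mem_comap, hu, LinearMap.mulLeft_zero_eq_zero,
          LinearMap.zero_apply]
        exact V.zero_mem
      rw [this, inf_top_eq]
    rw [hV'eq]
    omega
  · have hinj : Function.Injective (LinearMap.mulLeft k u) := by
      intro x y hxy
      simp only [LinearMap.mulLeft_apply] at hxy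
      exact mul_left_cancel₀ hu hxy
    have e1 : finrank k ↥((H (n+1)).map (LinearMap.mulLeft k u)) = finrank k ↥(H (n+1)) :=
      (LinearEquiv.finrank_eq (Submodule.equivMapOfInjective _ hinj _)).symm
    have e2 : V ⊓ (H (n+1)).map (LinearMap.mulLeft k u) = V'.map (LinearMap.mulLeft k u) := by
      ext x
      constructor
      · rintro ⟨hxV, y, hy, rfl⟩
        exact ⟨y, ⟨hy, by simpa using hxV⟩, rfl⟩
      · rintro ⟨y, ⟨hy1, hy2⟩, rfl⟩
        exact ⟨by simpa using hy2, y, hy1, rfl⟩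
    have e3 : finrank k ↥(V'.map (LinearMap.mulLeft k u)) = finrank k ↥V' :=
      (LinearEquiv.finrank_eq (Submodule.equivMapOfInjective _ hinj _)).symm
    haveI : FiniteDimensional k ↥((H (n+1)).map (LinearMap.mulLeft k u)) :=
      fd_of_le_H (map_mulLeft_le hu1 (n+1))
    have hsum := Submodule.finrank_sup_add_finrank_inf_eq V ((H (n+1)).map (LinearMap.mulLeft k u))
    rw [hS, e1, e2, e3] at hsum
    omega

lemma keyP : ∀ (n : ℕ) (V : Submodule k R), V ≤ (H (n+1)) →
    finrank k ↥(H (n+1)) ≤ finrank k V + (n+1) →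
    ∃ L ∈ (H 1), (H (n+1)) ≤ V ⊔ (H n).map (LinearMap.mulLeft k L) := by
  intro n
  induction n with
  | zero => exact keyP_base
  | succ n IH =>
    intro V hV hcodim
    by_contra hcon
    push_neg at hcon
    haveI : FiniteDimensional k V := fd_of_le_H hV
    set S : (Fin r → k) → Submodule k R :=
      fun c => V ⊔ (H (n+1)).map (LinearMap.mulLeft k (Lc c)) with hSdef
    have hSle : ∀ c, S c ≤ (H (n+2)) := fun c => sup_le hV (map_mulLeft_le (Lc_mem c) (n+1))
    haveI : ∀ c, FiniteDimensional k (S c) := fun c => fd_of_le_H (hSle c)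
    set N := finrank k ↥(H (n+2)) with hN
    -- the maximal dimension σ
    have hbdd : ∀ x ∈ Set.range (fun c => finrank k ↥(S c)), x ≤ N := by
      rintro x ⟨c, rfl⟩
      exact Submodule.finrank_mono (hSle c)
    set σ := sSup (Set.range (fun c => finrank k ↥(S c))) with hσ
    obtain ⟨c₀, hc₀⟩ : ∃ c₀, finrank k ↥(S c₀) = σ := by
      have := Nat.sSup_mem (s := Set.range (fun c => finrank k ↥(S c)))
        ⟨finrank k ↥(S 0), ⟨0, rfl⟩⟩ ⟨N, fun x hx => hbdd x hx⟩
      exact this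
    have hσmax : ∀ c, finrank k ↥(S c) ≤ σ := fun c =>
      le_csSup ⟨N, fun x hx => hbdd x hx⟩ ⟨c, rfl⟩
    have hSne : ∀ c, ¬ (H (n+2)) ≤ S c := fun c => hcon (Lc c) (Lc_mem c)
    have hσlt : σ < N := by
      rcases lt_or_eq_of_le (hbdd σ ⟨c₀, hc₀⟩) with h | h
      · exact h
      · exfalso
        apply hSne c₀
        rw [Submodule.eq_of_le_of_finrank_le (hSle c₀) (by rw [hc₀, h, hN])]
    -- spanning families
    obtain ⟨p, bV, hbV⟩ := exists_fin_span V
    obtain ⟨q, bm, hbm⟩ := exists_fin_span (H (n+1))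
    have hfamS : ∀ c, span k (Set.range (Sum.elim bV (fun j => Lc c * bm j))) = S c := by
      intro c
      rw [span_elim, hbV, hbm]
    obtain ⟨P₁, hP₁ne, hP₁⟩ := certGeneric bV bm c₀ (by rw [hfamS c₀, hc₀])
    have hgood : ∀ c, eval c P₁ ≠ 0 → finrank k ↥(S c) = σ := by
      intro c hc
      have := hP₁ c hc
      rw [hfamS c] at this
      exact le_antisymm (hσmax c) this
    -- the functional φ vanishing on S c₀
    have hp₀ : Submodule.comap (H (n+2) : Submodule k R).subtype (S c₀) ≠ ⊤ := by
      intro h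
      exact hSne c₀ (Submodule.comap_subtype_eq_top.mp h)
    obtain ⟨φ, hφ0, hφne⟩ := exists_functional hp₀
    -- key step: for any maximal c there is a certificate for domination
    have hkey : ∀ c, finrank k ↥(S c) = σ →
        ∃ P₂ : MvPolynomial (Fin r) k, P₂ ≠ 0 ∧
          ∀ c'', eval c'' P₂ ≠ 0 → S c ≤ S c'' := by
      intro c hcσ
      set u := Lc c with hu
      set V' : Submodule k R := (H (n+1)) ⊓ Submodule.comap (LinearMap.mulLeft k u) V with hV'
      haveI : FiniteDimensional k V' := fd_of_le_H (inf_le_left : V' ≤ (H (n+1)))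
      have hV'codim := codim_colon hV (Lc_mem c) hN.symm hcσ hσlt hcodim
      obtain ⟨v, hv1, hvle⟩ := IH V' (inf_le_left : V' ≤ (H (n+1))) hV'codim
      obtain ⟨c₁, rfl⟩ := exists_Lc hv1
      obtain ⟨p', bV', hbV'⟩ := exists_fin_span V'
      obtain ⟨q', bm', hbm'⟩ := exists_fin_span (H n)
      have hfam' : ∀ c'', span k (Set.range (Sum.elim bV' (fun j => Lc c'' * bm' j))) =
          V' ⊔ (H n).map (LinearMap.mulLeft k (Lc c'')) := by
        intro c''
        rw [span_elim, hbV', hbm']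
      have hT : ∀ c'', V' ⊔ (H n).map (LinearMap.mulLeft k (Lc c'')) ≤ (H (n+1)) :=
        fun c'' => sup_le (inf_le_left) (map_mulLeft_le (Lc_mem c'') n)
      haveI : ∀ c'', FiniteDimensional k ↥(V' ⊔ (H n).map (LinearMap.mulLeft k (Lc c''))) :=
        fun c'' => fd_of_le_H (hT c'')
      have hTeq : V' ⊔ (H n).map (LinearMap.mulLeft k (Lc c₁)) = (H (n+1)) :=
        le_antisymm (hT c₁) hvle
      obtain ⟨P₂, hP₂ne, hP₂⟩ := certGeneric bV' bm' c₁ (by rw [hfam' c₁, hTeq])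
      refine ⟨P₂, hP₂ne, ?_⟩
      intro c'' hc''
      have h1 : (H (n+1)) ≤ V' ⊔ (H n).map (LinearMap.mulLeft k (Lc c'')) := by
        have := hP₂ c'' hc''
        rw [hfam' c''] at this
        rw [Submodule.eq_of_le_of_finrank_le (hT c'') this]
      -- now S c ≤ S c''
      have h2 : (H (n+1)).map (LinearMap.mulLeft k u) ≤
          V ⊔ (H (n+1)).map (LinearMap.mulLeft k (Lc c'')) := by
        calc (H (n+1)).map (LinearMap.mulLeft k u)
            ≤ (V' ⊔ (H n).map (LinearMap.mulLeft k (Lc c''))).map (LinearMap.mulLeft k u) :=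
              Submodule.map_mono h1
          _ = V'.map (LinearMap.mulLeft k u) ⊔
              ((H n).map (LinearMap.mulLeft k (Lc c''))).map (LinearMap.mulLeft k u) := by
              rw [Submodule.map_sup]
          _ ≤ V ⊔ (H (n+1)).map (LinearMap.mulLeft k (Lc c'')) := by
              apply sup_le_sup
              · rintro x ⟨y, hy, rfl⟩
                simpa using hy.2
              · rw [← Submodule.map_comp, ← LinearMap.mulLeft_mul, mul_comm,
                  LinearMap.mulLeft_mul, Submodule.map_comp]
                exact Submodule.map_mono (map_mulLeft_le (Lc_mem c) n)
      calc S c = V ⊔ (H (n+1)).map (LinearMap.mulLeft k u) := rfl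
        _ ≤ V ⊔ (V ⊔ (H (n+1)).map (LinearMap.mulLeft k (Lc c''))) := sup_le_sup_left h2 _
        _ = S c'' := by rw [← sup_assoc, sup_idem]
    -- constancy of S on the good set
    have hconst : ∀ c, eval c P₁ ≠ 0 → S c = S c₀ := by
      intro c hc
      obtain ⟨P₂, hP₂ne, hP₂⟩ := hkey c (hgood c hc)
      obtain ⟨P₃, hP₃ne, hP₃⟩ := hkey c₀ hc₀
      obtain ⟨c'', hc''⟩ := exists_eval_ne (mul_ne_zero (mul_ne_zero hP₁ne hP₂ne) hP₃ne)
      simp only [map_mul, mul_ne_zero_iff] at hc''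
      have e1 : S c = S c'' :=
        Submodule.eq_of_le_of_finrank_le (hP₂ c'' hc''.1.2)
          (by rw [hgood c'' hc''.1.1, hgood c hc])
      have e2 : S c₀ = S c'' :=
        Submodule.eq_of_le_of_finrank_le (hP₃ c'' hc''.2)
          (by rw [hgood c'' hc''.1.1, hc₀])
      rw [e1, e2]
    -- φ vanishes on X i * f for all f ∈ H (n+1)
    have hXf : ∀ (f : R) (hf : f ∈ (H (n+1))) (i : Fin r),
        φ ⟨X i * f, X_mul_mem (n+1) i hf⟩ = 0 := by
      intro f hf
      set Qf : MvPolynomial (Fin r) k :=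
        ∑ i, C (φ ⟨X i * f, X_mul_mem (n+1) i hf⟩) * X i with hQf
      have hQfzero : Qf * P₁ = 0 := by
        apply MvPolynomial.funext
        intro c
        rw [map_mul, map_zero]
        by_cases hc : eval c P₁ = 0
        · rw [hc, mul_zero]
        · have hmem : Lc c * f ∈ S c₀ := by
            rw [← hconst c hc]
            exact le_sup_right (α := Submodule k R) ⟨f, hf, rfl⟩
          have hval : φ ⟨Lc c * f, (hSle c₀) hmem⟩ = 0 := by
            apply hφ0
            simpa using hmem
          have hsum : (⟨Lc c * f, (hSle c₀) hmem⟩ : ↥(H (n+2))) =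
              ∑ i, c i • ⟨X i * f, X_mul_mem (n+1) i hf⟩ := by
            apply Subtype.ext
            push_cast
            rw [Lc_mul]
          rw [hsum] at hval
          simp only [map_sum, map_smul, smul_eq_mul] at hval
          have : eval c Qf = 0 := by
            rw [hQf]
            simp only [map_sum, map_mul, eval_C, eval_X]
            rw [← hval]
            exact Finset.sum_congr rfl fun i _ => mul_comm _ _
          rw [this, zero_mul]
      have hQf0 : Qf = 0 := by
        rcases mul_eq_zero.mp hQfzero with h | h
        · exact h
        · exact absurd h hP₁ne
      intro i
      have := congrArg (coeff (Finsupp.single i 1)) hQf0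
      rw [hQf] at this
      simp only [MvPolynomial.coeff_sum, coeff_zero, coeff_C_mul, X,
        coeff_monomial] at this
      rw [Finset.sum_eq_single i] at this
      · simpa [X] using this
      · intro j _ hji
        rw [if_neg (fun h => hji (by
          have := Finsupp.single_left_inj (one_ne_zero (α := ℕ)) |>.mp h
          exact this)), mul_zero]
      · intro hi; exact absurd (Finset.mem_univ i) hi
    -- φ vanishes on all monomials of degree n+2, hence is zero
    have hφzero : φ = 0 := by
      have hmono : ∀ y : ↥(H (n+2)), (y : R) ∈
          ((fun d : Fin r →₀ ℕ => (monomial d (1:k) : R)) '' {d | Finsupp.degree d = n+2}) →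
          φ y = 0 := by
        rintro ⟨y, hy⟩ ⟨d, hd, heq⟩
        obtain ⟨i, d', hd', hfact⟩ := monomial_factor (k := k) hd
        have hd'mem : (monomial d' 1 : R) ∈ (H (n+1)) :=
          (mem_homogeneousSubmodule _ _).mpr (isHomogeneous_monomial _ hd')
        have heq' : (monomial d (1:k) : R) = y := heq
        have : (⟨y, hy⟩ : ↥(H (n+2))) = ⟨X i * monomial d' 1, X_mul_mem (n+1) i hd'mem⟩ := by
          apply Subtype.ext
          show y = X i * monomial d' 1
          rw [← heq']
          exact hfact
        rw [this]
        exact hXf _ hd'mem i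
      have hker : (⊤ : Submodule k ↥(H (n+2))) ≤ LinearMap.ker φ := by
        have hT : Submodule.span k
            ((Subtype.val) ⁻¹' ((fun d : Fin r →₀ ℕ => (monomial d (1:k) : R)) ''
              {d | Finsupp.degree d = n+2}) : Set ↥(H (n+2))) = ⊤ := by
          apply Submodule.map_injective_of_injective
            (Submodule.injective_subtype (H (n+2) : Submodule k R))
          rw [Submodule.map_span, Submodule.map_top, Submodule.range_subtype]
          apply le_antisymm
          · rw [Submodule.span_le]
            rintro x hx
            obtain ⟨y, ⟨d, hd, hy⟩, rfl⟩ := hx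
            have hy' : (monomial d (1:k) : R) = (y : R) := hy
            rw [show ((H (n+2) : Submodule k R).subtype y) = (y : R) from rfl, ← hy']
            exact (mem_homogeneousSubmodule _ _).mpr (isHomogeneous_monomial _ hd)
          · refine le_trans (H_le_span_monomials (n+2)) (Submodule.span_mono ?_)
            rintro x ⟨d, hd, rfl⟩
            have hxH : (monomial d (1:k) : R) ∈ (H (n+2)) :=
              (mem_homogeneousSubmodule _ _).mpr (isHomogeneous_monomial _ hd)
            exact ⟨⟨monomial d 1, hxH⟩, ⟨d, hd, rfl⟩, rfl⟩
        rw [← hT, Submodule.span_le]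
        intro y hy
        exact hmono y hy
      ext y
      exact hker (Submodule.mem_top)
    exact hφne hφzero

omit [Infinite k] in
lemma hilb_link (I : Ideal (MvPolynomial (Fin r) k)) (n : ℕ) :
    Module.finrank k ↥((homogeneousSubmodule (Fin r) k n).map
        (Ideal.Quotient.mkₐ k I).toLinearMap) +
      finrank k ↥((H n) ⊓ Submodule.restrictScalars k I) = finrank k ↥(H n) := by
  set φ : ↥(H n) →ₗ[k] (MvPolynomial (Fin r) k ⧸ I) :=
    ((Ideal.Quotient.mkₐ k I).toLinearMap).comp (H n : Submodule k R).subtype with hφ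
  have hrange : LinearMap.range φ = (H n).map (Ideal.Quotient.mkₐ k I).toLinearMap := by
    rw [hφ, LinearMap.range_comp, Submodule.range_subtype]
  have hker : LinearMap.ker φ =
      Submodule.comap (H n : Submodule k R).subtype (Submodule.restrictScalars k I) := by
    ext x
    simp only [LinearMap.mem_ker, hφ, LinearMap.comp_apply, Submodule.mem_comap,
      Submodule.restrictScalars_mem, AlgHom.toLinearMap_apply, Ideal.Quotient.mkₐ_eq_mk]
    exact Ideal.Quotient.eq_zero_iff_mem
  have hkerrank : finrank k ↥(LinearMap.ker φ) =
      finrank k ↥((H n) ⊓ Submodule.restrictScalars k I) := by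
    rw [hker]
    rw [← Submodule.map_comap_subtype]
    exact LinearEquiv.finrank_eq (Submodule.equivMapOfInjective _
      (Submodule.injective_subtype _) _)
  have := LinearMap.finrank_range_add_finrank_ker φ
  rw [hrange, hkerrank] at this
  exact this

theorem stmt5' (I : Ideal (MvPolynomial (Fin r) k))
    (t : ℕ) (ht : 1 ≤ t)
    (hht : finrank k ↥((homogeneousSubmodule (Fin r) k t).map
      (Ideal.Quotient.mkₐ k I).toLinearMap) ≤ t) :
    ∃ L ∈ homogeneousSubmodule (Fin r) k 1,
      ((homogeneousSubmodule (Fin r) k t).map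
        (Ideal.Quotient.mkₐ k (I ⊔ Ideal.span {L})).toLinearMap) = ⊥ := by
  obtain ⟨s, rfl⟩ : ∃ s, t = s + 1 := ⟨t - 1, (Nat.succ_pred_eq_of_pos ht).symm⟩
  set V : Submodule k R := (H (s+1)) ⊓ Submodule.restrictScalars k I with hVdef
  have hV : V ≤ (H (s+1)) := inf_le_left
  have hlink := hilb_link I (s+1)
  rw [show (H (s+1)) ⊓ Submodule.restrictScalars k I = V from hVdef.symm] at hlink
  have hcodim : finrank k ↥(H (s+1)) ≤ finrank k V + (s+1) := by omega
  obtain ⟨L, hL1, hle⟩ := keyP s V hV hcodim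
  refine ⟨L, hL1, ?_⟩
  rw [Submodule.eq_bot_iff]
  rintro x ⟨f, hf, rfl⟩
  simp only [AlgHom.toLinearMap_apply, Ideal.Quotient.mkₐ_eq_mk]
  rw [Ideal.Quotient.eq_zero_iff_mem]
  obtain ⟨g, hg, h, hh, rfl⟩ := Submodule.mem_sup.mp (hle hf)
  apply Submodule.add_mem
  · exact Submodule.mem_sup_left hg.2
  · obtain ⟨y, _, rfl⟩ := hh
    apply Submodule.mem_sup_right
    rw [LinearMap.mulLeft_apply]
    exact Ideal.mem_span_singleton.mpr (dvd_mul_right L y)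


/-- consequence of Green's theorem. Over a field of
characteristic zero, if `A = R/I` is artinian and `t ≥ 1` satisfies
`dim_k (R/I)_t ≤ t`, then there is a linear form `L` with
`dim_k (R/(I+(L)))_t = 0`. -/
theorem stmt5 (k : Type) [Field k] [CharZero k] (r : ℕ)
    (I : Ideal (MvPolynomial (Fin r) k)) (hIhom : IsHomogIdeal I)
    (hart : ArtinianQuot k I)
    (t : ℕ) (ht : 1 ≤ t) (hht : hilb k I t ≤ t) :
    ∃ L ∈ homogeneousSubmodule (Fin r) k 1, hilb k (I ⊔ Ideal.span {L}) t = 0 := by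
  haveI : Infinite k := inferInstance
  obtain ⟨L, hL1, hbot⟩ := stmt5' I t ht hht
  refine ⟨L, hL1, ?_⟩
  unfold hilb quotPiece
  rw [hbot]
  exact finrank_bot k _
end

section
/- (Corollary 7.) Let k be a field of characteristic zero and let A = R/I be any artinian standard graded algebra with dim_k A_1 ≤ 2 (equivalently, any artinian quotient of a polynomial ring in two variables, i.e., any codimension ≤ 2 artinian algebra). Then A enjoys the Weak Lefschetz Property. -/
open MvPolynomial Finset

section AuxWLP

variable {k : Type} [Field k]

lemma auxDegreeSum {n : ℕ} (m : Fin n →₀ ℕ) : m.degree = ∑ i : Fin n, m i :=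
  Finset.sum_subset (Finset.subset_univ _) (by
    intro x _ hx
    simpa using Finsupp.notMem_support_iff.mp hx)

noncomputable instance auxHomogFD (σ : Type) [Fintype σ] (n : ℕ) :
    FiniteDimensional k (homogeneousSubmodule σ k n) := by
  have hle : homogeneousSubmodule σ k n ≤ restrictTotalDegree σ k n := by
    intro p hp
    rw [mem_restrictTotalDegree]
    exact MvPolynomial.IsHomogeneous.totalDegree_le hp
  exact Submodule.finiteDimensional_of_le hle

/-- the monomial family in two variables of degree n -/
noncomputable def auxMon2 (n : ℕ) (t : Fin (n+1)) : MvPolynomial (Fin 2) k :=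
  monomial (Finsupp.single 0 (t : ℕ) + Finsupp.single 1 (n - (t : ℕ))) 1

lemma auxMon2_homog (n : ℕ) (t : Fin (n+1)) : (auxMon2 (k := k) n t).IsHomogeneous n := by
  apply isHomogeneous_monomial
  rw [auxDegreeSum]
  simp only [Finsupp.add_apply, Finsupp.single_apply]
  have ht : (t : ℕ) ≤ n := Nat.lt_succ_iff.mp t.isLt
  simp [Nat.add_sub_cancel' ht]

lemma auxSpanMon2 (n : ℕ) :
    homogeneousSubmodule (Fin 2) k n = Submodule.span k (Set.range (auxMon2 (k := k) n)) := by
  apply le_antisymm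
  · intro p hp
    rw [← p.support_sum_monomial_coeff]
    apply Submodule.sum_mem
    intro m hm
    have hdeg : m.degree = n := by
      rw [Finsupp.degree_eq_weight_one]
      exact (mem_homogeneousSubmodule n p).mp hp (MvPolynomial.mem_support_iff.mp hm)
    have h0 : m 0 ≤ n := by rw [auxDegreeSum, Fin.sum_univ_two] at hdeg; omega
    have hmeq : m = Finsupp.single 0 (m 0) + Finsupp.single 1 (n - m 0) := by
      ext i
      fin_cases i <;> simp [Finsupp.single_apply] <;>
        rw [auxDegreeSum, Fin.sum_univ_two] at hdeg <;> omega
    have : monomial m (coeff m p) = (coeff m p) • auxMon2 (k := k) n ⟨m 0, by omega⟩ := by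
      rw [auxMon2, ← hmeq]
      simp [smul_monomial]
    rw [this]
    exact Submodule.smul_mem _ _ (Submodule.subset_span ⟨_, rfl⟩)
  · rw [Submodule.span_le]
    rintro _ ⟨t, rfl⟩
    exact auxMon2_homog n t

lemma auxMon2_li (n : ℕ) : LinearIndependent k (auxMon2 (k := k) n) := by
  have hb := (MvPolynomial.basisMonomials (Fin 2) k).linearIndependent
  have : auxMon2 (k := k) n = (MvPolynomial.basisMonomials (Fin 2) k) ∘ (fun t : Fin (n+1) =>
      Finsupp.single 0 (t : ℕ) + Finsupp.single 1 (n - (t : ℕ))) := by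
    funext t
    rw [Function.comp_apply, coe_basisMonomials]
    rfl
  rw [this]
  apply hb.comp
  intro s t hst
  have := congrArg (fun f : Fin 2 →₀ ℕ => f 0) hst
  simp [Finsupp.single_apply] at this
  exact Fin.ext this

lemma auxFinrankHomog2 (n : ℕ) :
    Module.finrank k (homogeneousSubmodule (Fin 2) k n) = n + 1 := by
  rw [auxSpanMon2, finrank_span_eq_card (auxMon2_li n)]
  simp

/-- the key two-variable decomposition -/
lemma auxTwoVarDecomp (j : ℕ) (hj : 1 ≤ j) (ℓ g : MvPolynomial (Fin 2) k)
    (hℓ : ℓ.IsHomogeneous 1) (hg : g.IsHomogeneous j) (pt : Fin 2 → k)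
    (hℓne : ℓ ≠ 0) (hℓ0 : eval pt ℓ = 0) (hg0 : eval pt g ≠ 0) :
    homogeneousSubmodule (Fin 2) k j =
      (homogeneousSubmodule (Fin 2) k (j-1)).map (LinearMap.mulLeft k ℓ)
        ⊔ Submodule.span k {g} := by
  set Q := (homogeneousSubmodule (Fin 2) k (j-1)).map (LinearMap.mulLeft k ℓ) with hQ
  have hQP : Q ≤ homogeneousSubmodule (Fin 2) k j := by
    rintro _ ⟨p, hp, rfl⟩
    have := hℓ.mul (mem_homogeneousSubmodule _ _ |>.mp hp)
    rw [mem_homogeneousSubmodule]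
    rw [LinearMap.mulLeft_apply]
    convert this using 1
    omega
  have hinj : Function.Injective (LinearMap.mulLeft k ℓ) := by
    intro a b hab
    simpa [LinearMap.mulLeft_apply] using mul_left_cancel₀ hℓne hab
  have hQrank : Module.finrank k Q = j := by
    have he := (Submodule.equivMapOfInjective _ hinj
      (homogeneousSubmodule (Fin 2) k (j-1))).finrank_eq
    rw [hQ, ← he, auxFinrankHomog2]
    omega
  have hgP : g ∈ homogeneousSubmodule (Fin 2) k j := hg
  have hgQ : g ∉ Q := by
    rintro ⟨p, _, rfl⟩
    apply hg0
    simp [hℓ0]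
  have hle : Q ⊔ Submodule.span k {g} ≤ homogeneousSubmodule (Fin 2) k j :=
    sup_le hQP ((Submodule.span_singleton_le_iff_mem _ _).mpr hgP)
  haveI : FiniteDimensional k (Q ⊔ Submodule.span k {g} : Submodule k _) :=
    Submodule.finiteDimensional_of_le hle
  have hlt : Q < Q ⊔ Submodule.span k {g} :=
    lt_of_le_of_ne le_sup_left (by
      intro h
      exact hgQ (h ▸ (le_sup_right : Submodule.span k {g} ≤ Q ⊔ _)
        (Submodule.mem_span_singleton_self g)))
  have h1 : j < Module.finrank k (Q ⊔ Submodule.span k {g} : Submodule k _) := by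
    rw [← hQrank]
    exact Submodule.finrank_lt_finrank_of_lt hlt
  symm
  apply Submodule.eq_of_le_of_finrank_le hle
  rw [auxFinrankHomog2]
  omega

lemma auxHomogZeroC {r : ℕ} {g : MvPolynomial (Fin r) k} (hg : g.IsHomogeneous 0) :
    g = C (coeff 0 g) := by
  ext d
  rcases eq_or_ne d 0 with rfl | hd
  · simp
  · rw [hg.coeff_eq_zero (by simpa [Finsupp.degree_eq_zero_iff] using hd)]
    rw [coeff_C, if_neg (Ne.symm hd)]

lemma auxKeyRed {r : ℕ} (I : Ideal (MvPolynomial (Fin r) k))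
    (φ : MvPolynomial (Fin 2) k →ₐ[k] MvPolynomial (Fin r) k)
    (hbase : ∀ t : Fin r, ∃ p : MvPolynomial (Fin 2) k,
      p.IsHomogeneous 1 ∧ X t - φ p ∈ I) :
    ∀ (j : ℕ) (g : MvPolynomial (Fin r) k), g.IsHomogeneous j →
      ∃ p : MvPolynomial (Fin 2) k, p.IsHomogeneous j ∧ g - φ p ∈ I := by
  have main : ∀ (j : ℕ), homogeneousSubmodule (Fin r) k j ≤
      (homogeneousSubmodule (Fin 2) k j).map φ.toLinearMap ⊔
        Submodule.restrictScalars k I := by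
    intro j
    induction j with
    | zero =>
      intro g hg
      apply Submodule.mem_sup_left
      refine ⟨C (coeff 0 g), isHomogeneous_C _ _, ?_⟩
      show φ (C (coeff 0 g)) = g
      rw [← MvPolynomial.algebraMap_eq, AlgHom.commutes, MvPolynomial.algebraMap_eq]
      exact (auxHomogZeroC hg).symm
    | succ j ih =>
      intro g hg
      rw [← g.support_sum_monomial_coeff]
      apply Submodule.sum_mem
      intro m hm
      have hdeg : ∑ i : Fin r, m i = j + 1 := by
        rw [← auxDegreeSum, Finsupp.degree_eq_weight_one]
        exact hg (MvPolynomial.mem_support_iff.mp hm)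
      have hmne : ∃ t, m t ≠ 0 := by
        by_contra h
        push_neg at h
        simp [h] at hdeg
      obtain ⟨t, ht⟩ := hmne
      have hle : Finsupp.single t 1 ≤ m := by
        rw [Finsupp.single_le_iff]
        omega
      set m' := m - Finsupp.single t 1 with hm'
      have hmeq : m = Finsupp.single t 1 + m' := (add_tsub_cancel_of_le hle).symm
      have hpt : ∀ i, m i = (if i = t then 1 else 0) + m' i := by
        intro i
        conv_lhs => rw [hmeq]
        simp [Finsupp.single_apply, eq_comm]
      have hdeg' : m'.degree = j := by
        rw [auxDegreeSum]
        have h2 : ∑ i : Fin r, m i = ∑ i : Fin r, ((if i = t then 1 else 0) + m' i) :=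
          Finset.sum_congr rfl (fun i _ => hpt i)
        rw [Finset.sum_add_distrib, Finset.sum_ite_eq', if_pos (Finset.mem_univ t)] at h2
        omega
      have hmon' : (monomial m' (coeff m g)).IsHomogeneous j :=
        isHomogeneous_monomial _ hdeg'
      have hmem' := ih hmon'
      rw [Submodule.mem_sup] at hmem'
      obtain ⟨y, hy, w, hw, hyw⟩ := hmem'
      obtain ⟨p, hp, rfl⟩ := hy
      obtain ⟨e, he, hXe⟩ := hbase t
      rw [Submodule.restrictScalars_mem] at hw
      have hfact : monomial m (coeff m g) = X t * monomial m' (coeff m g) := by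
        rw [hmeq, monomial_single_add, pow_one]
      rw [Submodule.mem_sup]
      refine ⟨φ.toLinearMap (e * p), ⟨e * p, ?_, rfl⟩,
        (X t - φ e) * (φ.toLinearMap p + w) + φ e * w, ?_, ?_⟩
      · show (e * p).IsHomogeneous (j + 1)
        have := he.mul hp
        convert this using 1
        omega
      · rw [Submodule.restrictScalars_mem]
        exact I.add_mem (I.mul_mem_right _ hXe) (I.mul_mem_left _ hw)
      · rw [hfact, ← hyw]
        simp only [AlgHom.toLinearMap_apply, map_mul]
        ring
  intro j g hg
  have := main j hg
  rw [Submodule.mem_sup] at this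
  obtain ⟨y, hy, w, hw, hyw⟩ := this
  obtain ⟨p, hp, rfl⟩ := hy
  exact ⟨p, hp, by
    rw [Submodule.restrictScalars_mem] at hw
    simpa [← hyw] using hw⟩

end AuxWLP

set_option maxHeartbeats 1000000
set_option synthInstance.maxHeartbeats 400000

/-- Corollary 7, [HMNW]. Over a field of characteristic
zero, every artinian standard graded algebra of codimension at most 2
(i.e. with `dim_k A_1 ≤ 2`) enjoys the Weak Lefschetz Property. -/
theorem stmt9 (k : Type) [Field k] [CharZero k] (r : ℕ)
    (I : Ideal (MvPolynomial (Fin r) k)) (hIhom : IsHomogIdeal I)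
    (hart : ArtinianQuot k I)
    (hcodim : hilb k I 1 ≤ 2) :
    WLP k I := by
  classical
  have hfd : ∀ i : ℕ, FiniteDimensional k (quotPiece k I i) := by
    intro i
    unfold quotPiece
    infer_instance
  haveI := hfd 1
  haveI : Module.Free k (quotPiece k I 1) := Module.Free.of_divisionRing k _
  -- pick generators of the degree-1 piece
  have hcodim' : Module.finrank k (quotPiece k I 1) ≤ 2 := hcodim
  set B := Module.finBasis k (quotPiece k I 1) with hB
  set wfun : Fin 2 → (MvPolynomial (Fin r) k ⧸ I) := fun i =>
    if h : (i : ℕ) < Module.finrank k (quotPiece k I 1) then ((B ⟨i, h⟩ : quotPiece k I 1) : _)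
    else 0 with hwfun
  have hwmem : ∀ i : Fin 2, wfun i ∈ quotPiece k I 1 := by
    intro i
    rw [hwfun]
    dsimp only
    split
    · exact Submodule.coe_mem _
    · exact Submodule.zero_mem _
  have hspan : ∀ z ∈ quotPiece k I 1, z ∈ Submodule.span k {wfun 0, wfun 1} := by
    intro z hz
    have hz2 : (⟨z, hz⟩ : quotPiece k I 1) =
        ∑ idx, B.repr ⟨z, hz⟩ idx • B idx := (B.sum_repr ⟨z, hz⟩).symm
    have hz3 : z = ∑ idx, B.repr ⟨z, hz⟩ idx • ((B idx : quotPiece k I 1) : _) := by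
      have := congrArg (Subtype.val) hz2
      simpa using this
    rw [hz3, AddSubmonoidClass.coe_finset_sum]
    apply Submodule.sum_mem
    intro idx _
    rw [SetLike.val_smul]
    apply Submodule.smul_mem
    have hidx2 : (idx : ℕ) < 2 := lt_of_lt_of_le idx.isLt hcodim'
    have hBeq : ((B idx : quotPiece k I 1) : _) = wfun ⟨idx, hidx2⟩ := by
      rw [hwfun]
      dsimp only
      rw [dif_pos idx.isLt]
    rw [hBeq]
    have : ∀ j : Fin 2, wfun j ∈ ({wfun 0, wfun 1} : Set _) := by
      intro j
      fin_cases j <;> simp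
    exact Submodule.subset_span (this _)
  -- lift the generators
  obtain ⟨u, hu1, huw⟩ : ∃ u, u ∈ homogeneousSubmodule (Fin r) k 1 ∧
      Ideal.Quotient.mk I u = wfun 0 := by
    obtain ⟨u, hu, h⟩ := (hwmem 0)
    exact ⟨u, hu, h⟩
  obtain ⟨v, hv1, hvw⟩ : ∃ v, v ∈ homogeneousSubmodule (Fin r) k 1 ∧
      Ideal.Quotient.mk I v = wfun 1 := by
    obtain ⟨v, hv, h⟩ := (hwmem 1)
    exact ⟨v, hv, h⟩
  -- the 2-variable comparison map
  set φ : MvPolynomial (Fin 2) k →ₐ[k] MvPolynomial (Fin r) k := aeval ![u, v] with hφdef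
  have hφX0 : φ (X 0) = u := by simp [hφdef]
  have hφX1 : φ (X 1) = v := by simp [hφdef]
  have hφhom : ∀ {n : ℕ} (p : MvPolynomial (Fin 2) k), p.IsHomogeneous n →
      (φ p).IsHomogeneous n := by
    intro n p hp
    have h2 := hp.aeval ![u, v] (fun i => by
      fin_cases i
      · exact hu1
      · exact hv1)
    simpa [hφdef] using h2
  have hsmul : ∀ (a : k) (x : MvPolynomial (Fin r) k),
      Ideal.Quotient.mk I (a • x) = a • Ideal.Quotient.mk I x := fun a x =>
    map_smul (Ideal.Quotient.mkₐ k I) a x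
  have hbase : ∀ t : Fin r, ∃ p : MvPolynomial (Fin 2) k,
      p.IsHomogeneous 1 ∧ X t - φ p ∈ I := by
    intro t
    have hXt : Ideal.Quotient.mk I (X t) ∈ quotPiece k I 1 :=
      ⟨X t, isHomogeneous_X _ _, rfl⟩
    obtain ⟨a, b, hab⟩ := Submodule.mem_span_pair.mp (hspan _ hXt)
    refine ⟨C a * X 0 + C b * X 1,
      (isHomogeneous_C_mul_X a 0).add (isHomogeneous_C_mul_X b 1), ?_⟩
    have hφp : φ (C a * X 0 + C b * X 1) = a • u + b • v := by
      simp [hφdef, MvPolynomial.algebraMap_eq, C_mul']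
    rw [← Ideal.Quotient.eq_zero_iff_mem, map_sub, hφp, map_add, hsmul, hsmul,
      huw, hvw, hab, sub_self]
  -- the artinian bound
  obtain ⟨N, hN⟩ := hart
  have hNmem : ∀ g : MvPolynomial (Fin r) k, g.IsHomogeneous N → g ∈ I := by
    intro g hg
    have h0 : hilb k I N = 0 := hN N le_rfl
    unfold hilb at h0
    have hbot : quotPiece k I N = ⊥ := by
      haveI := hfd N
      exact Submodule.finrank_eq_zero.mp h0
    have hmem : Ideal.Quotient.mk I g ∈ quotPiece k I N := ⟨g, hg, rfl⟩
    rw [hbot, Submodule.mem_bot] at hmem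
    exact Ideal.Quotient.eq_zero_iff_mem.mp hmem
  -- the minimal degree of a "homogeneous relation"
  have hdex : ∃ d : ℕ, ∃ p : MvPolynomial (Fin 2) k,
      p ≠ 0 ∧ p.IsHomogeneous d ∧ φ p ∈ I := by
    refine ⟨N, X 0 ^ N, pow_ne_zero _ (X_ne_zero 0), isHomogeneous_X_pow 0 N, ?_⟩
    rw [map_pow, hφX0]
    exact hNmem _ (by simpa using (hu1 : (u : MvPolynomial (Fin r) k).IsHomogeneous 1).pow N)
  set d0 := Nat.find hdex with hd0def
  obtain ⟨f, hfne, hfhom, hfI⟩ := Nat.find_spec hdex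
  by_cases hd0 : d0 = 0
  · -- the quotient is trivial
    have hf0 : f = C (coeff 0 f) := by
      apply auxHomogZeroC
      rw [← hd0]
      exact hfhom
    have hc : coeff 0 f ≠ 0 := by
      intro h
      rw [h, map_zero] at hf0
      exact hfne hf0
    have hCc : (C (coeff 0 f) : MvPolynomial (Fin r) k) ∈ I := by
      have : φ f = C (coeff 0 f) := by
        conv_lhs => rw [hf0]
        rw [← MvPolynomial.algebraMap_eq, AlgHom.commutes, MvPolynomial.algebraMap_eq]
      rwa [this] at hfI
    have h1 : (1 : MvPolynomial (Fin r) k) = C ((coeff 0 f)⁻¹) * C (coeff 0 f) := by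
      rw [← C_mul, inv_mul_cancel₀ hc, C_1]
    have htop : I = ⊤ := I.eq_top_iff_one.mpr (h1 ▸ I.mul_mem_left _ hCc)
    haveI : Subsingleton (MvPolynomial (Fin r) k ⧸ I) :=
      Ideal.Quotient.subsingleton_iff.mpr htop
    exact ⟨0, Submodule.zero_mem _, fun i => Or.inr fun y _ =>
      ⟨0, Submodule.zero_mem _, Subsingleton.elim _ _⟩⟩
  · -- the main case
    have hd0pos : 1 ≤ d0 := Nat.one_le_iff_ne_zero.mpr hd0
    haveI : Infinite k := inferInstance
    have hpt : ∃ pt : Fin 2 → k, eval pt f ≠ 0 := by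
      by_contra h
      push_neg at h
      exact hfne (MvPolynomial.funext fun x => by simp [h x])
    obtain ⟨pt, hptf⟩ := hpt
    have hs : ∃ s : Fin 2, pt s ≠ 0 := by
      by_contra h
      push_neg at h
      have hpt0 : pt = 0 := funext h
      apply hptf
      rw [hpt0]
      rw [show (eval (0 : Fin 2 → k)) f = constantCoeff f from by
        simp [eval_zero]]
      rw [show constantCoeff f = coeff 0 f from rfl]
      apply hfhom.coeff_eq_zero
      simpa [map_zero] using (Ne.symm hd0)
    obtain ⟨s, hss⟩ := hs
    set ℓ : MvPolynomial (Fin 2) k := C (pt 1) * X 0 - C (pt 0) * X 1 with hℓdef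
    have hℓhom : ℓ.IsHomogeneous 1 :=
      (isHomogeneous_C_mul_X _ 0).sub (isHomogeneous_C_mul_X _ 1)
    have hℓ0 : eval pt ℓ = 0 := by
      simp [hℓdef, mul_comm]
    have hℓne : ℓ ≠ 0 := by
      intro h
      apply hss
      fin_cases s
      · have h2 := congrArg (eval (fun i : Fin 2 => if i = 1 then (1:k) else 0)) h
        rw [hℓdef] at h2
        simpa using h2
      · have h2 := congrArg (eval (fun i : Fin 2 => if i = 0 then (1:k) else 0)) h
        rw [hℓdef] at h2
        simpa using h2
    refine ⟨φ ℓ, hφhom ℓ hℓhom, fun i => ?_⟩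
    by_cases hci : i + 1 < d0
    · -- injective range
      left
      intro x hx hLx
      obtain ⟨g, hg, rfl⟩ := hx
      obtain ⟨p, hp, hgp⟩ := auxKeyRed I φ hbase i g hg
      have hmkg : Ideal.Quotient.mk I g = Ideal.Quotient.mk I (φ p) :=
        Ideal.Quotient.eq.mpr hgp
      have h2 : φ (ℓ * p) ∈ I := by
        rw [← Ideal.Quotient.eq_zero_iff_mem, map_mul, map_mul, ← hmkg]
        exact hLx
      have hzero : ℓ * p = 0 := by
        by_contra hne
        have hhom : (ℓ * p).IsHomogeneous (i + 1) := by
          have := hℓhom.mul hp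
          convert this using 1
          omega
        have : d0 ≤ i + 1 := Nat.find_le ⟨ℓ * p, hne, hhom, h2⟩
        omega
      have hp0 : p = 0 := by
        rcases mul_eq_zero.mp hzero with h | h
        · exact absurd h hℓne
        · exact h
      show Ideal.Quotient.mk I g = 0
      rw [hmkg, hp0, map_zero, map_zero]
    · -- surjective range
      right
      push_neg at hci
      intro y hy
      obtain ⟨g, hg, rfl⟩ := hy
      obtain ⟨p, hp, hgp⟩ := auxKeyRed I φ hbase (i+1) g hg
      set gbig : MvPolynomial (Fin 2) k := X s ^ (i + 1 - d0) * f with hgbigdef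
      have hgbighom : gbig.IsHomogeneous (i + 1) := by
        have := (isHomogeneous_X_pow s (i + 1 - d0)).mul hfhom
        convert this using 1
        omega
      have hgbig0 : eval pt gbig ≠ 0 := by
        rw [hgbigdef, map_mul, map_pow, eval_X]
        exact mul_ne_zero (pow_ne_zero _ hss) hptf
      have hφgbig : φ gbig ∈ I := by
        rw [hgbigdef, map_mul]
        exact I.mul_mem_left _ hfI
      have hdecomp := auxTwoVarDecomp (i + 1) (by omega) ℓ gbig hℓhom hgbighom pt
        hℓne hℓ0 hgbig0
      have hpmem : p ∈ homogeneousSubmodule (Fin 2) k (i + 1) := hp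
      rw [hdecomp, Submodule.mem_sup] at hpmem
      obtain ⟨q, hq, z, hz, hqz⟩ := hpmem
      obtain ⟨s', hs', rfl⟩ := hq
      obtain ⟨α, rfl⟩ := Submodule.mem_span_singleton.mp hz
      have hs'hom : (s' : MvPolynomial (Fin 2) k).IsHomogeneous i := by
        simpa using (mem_homogeneousSubmodule _ _).mp hs'
      refine ⟨Ideal.Quotient.mk I (φ s'), ⟨φ s', hφhom s' hs'hom, rfl⟩, ?_⟩
      have hαI : φ (α • gbig) ∈ I := by
        rw [map_smul, ← C_mul']
        exact I.mul_mem_left _ hφgbig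
      have hmkg : Ideal.Quotient.mk I g = Ideal.Quotient.mk I (φ (ℓ * s')) := by
        rw [Ideal.Quotient.eq]
        have : g - φ (LinearMap.mulLeft k ℓ s' + α • gbig) ∈ I := hqz ▸ hgp
        rw [map_add] at this
        have h3 := I.add_mem this hαI
        convert h3 using 1
        rw [LinearMap.mulLeft_apply]
        ring
      rw [← map_mul, ← map_mul, ← hmkg]
      rfl
end

section
/- Let R = k[x,y,z] with k a field of characteristic zero, let Z ⊂ P^2 be a reduced set of 12 points whose coordinate ring R/I_Z has Hilbert function 1, 3, 6, 10, 12, 12, 12, … (constant equal to 12 from degree 4 on), and let I = I_Z + (x,y,z)^6. Then A = R/I is an artinian standard graded algebra with Hilbert function 1, 3, 6, 10, 12, 12, 0 and A enjoys the Weak Lefschetz Property. -/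
open MvPolynomial Finset

/-- The saturated homogeneous ideal `I_Z ⊆ k[x,y,z]` of the set `Z ⊆ P²` of
points represented by the nonzero vectors `v p`: the polynomials vanishing on
all the lines through the origin spanned by the `v p` (the affine cone over
`Z`). -/
noncomputable def pointsIdeal (k : Type) [Field k] (v : Fin 12 → (Fin 3 → k)) :
    Ideal (MvPolynomial (Fin 3) k) :=
  ⨅ (p : Fin 12), ⨅ (c : k), RingHom.ker (MvPolynomial.eval (c • v p))

section Aux

variable {k : Type} [Field k] {r : ℕ}

lemma aux_eval_smul {f : MvPolynomial (Fin r) k} {n : ℕ}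
    (hf : f.IsHomogeneous n) (c : k) (w : Fin r → k) :
    eval (c • w) f = c ^ n * eval w f := by
  rw [eval_eq, eval_eq, Finset.mul_sum]
  apply Finset.sum_congr rfl
  intro d hd
  have hdeg : d.degree = n := by
    by_contra h
    exact (MvPolynomial.mem_support_iff.mp hd) (hf.coeff_eq_zero h)
  have h2 : ∏ i ∈ d.support, (c • w) i ^ d i
      = c ^ n * ∏ i ∈ d.support, w i ^ d i := by
    simp only [Pi.smul_apply, smul_eq_mul, mul_pow, Finset.prod_mul_distrib,
      Finset.prod_pow_eq_pow_sum]
    rw [show ∑ i ∈ d.support, d i = n from hdeg]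
  rw [h2]; ring

lemma aux_exists_poly (w : Fin r → k) (f : MvPolynomial (Fin r) k) :
    ∃ Q : Polynomial k, (∀ c : k, Q.eval c = eval (c • w) f) ∧
      ∀ n : ℕ, Q.coeff n = eval w (homogeneousComponent n f) := by
  refine ⟨∑ n ∈ Finset.range (f.totalDegree + 1),
      Polynomial.C (eval w (homogeneousComponent n f)) * Polynomial.X ^ n, ?_, ?_⟩
  · intro c
    conv_rhs => rw [← f.sum_homogeneousComponent]
    rw [map_sum, Polynomial.eval_finset_sum]
    refine Finset.sum_congr rfl fun n _ => ?_
    rw [aux_eval_smul (homogeneousComponent_isHomogeneous n f) c w]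
    rw [Polynomial.eval_mul, Polynomial.eval_C, Polynomial.eval_pow, Polynomial.eval_X, mul_comm]
  · intro n
    rw [Polynomial.finset_sum_coeff]
    simp only [Polynomial.coeff_C_mul, Polynomial.coeff_X_pow, mul_ite, mul_one, mul_zero]
    rw [Finset.sum_ite_eq]
    split_ifs with h
    · rfl
    · rw [Finset.mem_range, not_lt] at h
      rw [homogeneousComponent_eq_zero n f (by omega), map_zero]

lemma mem_pointsIdeal_iff {v : Fin 12 → (Fin 3 → k)} {f : MvPolynomial (Fin 3) k} :
    f ∈ pointsIdeal k v ↔ ∀ (p : Fin 12) (c : k), eval (c • v p) f = 0 := by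
  simp [pointsIdeal, Ideal.mem_iInf, RingHom.mem_ker]

lemma pointsIdeal_homog [CharZero k] (v : Fin 12 → (Fin 3 → k))
    {f : MvPolynomial (Fin 3) k} (hf : f ∈ pointsIdeal k v) (n : ℕ) :
    homogeneousComponent n f ∈ pointsIdeal k v := by
  rw [mem_pointsIdeal_iff] at hf ⊢
  intro p c
  obtain ⟨Q, hQe, hQc⟩ := aux_exists_poly (c • v p) f
  have hQ : Q = 0 := by
    apply Polynomial.funext
    intro c'
    rw [hQe c', smul_smul, hf p (c' * c), Polynomial.eval_zero]
  rw [← hQc n, hQ, Polynomial.coeff_zero]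

lemma span_X_pow_coeff (N : ℕ) :
    ∀ f ∈ (Ideal.span (Set.range X) : Ideal (MvPolynomial (Fin r) k)) ^ N,
      ∀ d : Fin r →₀ ℕ, d.degree < N → coeff d f = 0 := by
  induction N with
  | zero => intro f _ d hd; omega
  | succ N ih =>
    intro f hf
    rw [pow_succ] at hf
    refine Submodule.mul_induction_on hf ?_ ?_
    · intro a ha b hb d hd
      rw [coeff_mul]
      apply Finset.sum_eq_zero
      intro x hx
      have hxd : x.1 + x.2 = d := Finset.HasAntidiagonal.mem_antidiagonal.mp hx
      have hdd : x.1.degree + x.2.degree = d.degree := by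
        rw [← hxd]; simp [Finsupp.degree_eq_weight_one, map_add]
      by_cases h1 : x.1.degree < N
      · rw [ih a ha x.1 h1, zero_mul]
      · have hx2 : x.2 = 0 := (Finsupp.degree_eq_zero_iff _).mp (by omega)
        have hb0 : constantCoeff b = 0 := by
          have hle : Ideal.span (Set.range X) ≤
              RingHom.ker (constantCoeff : MvPolynomial (Fin r) k →+* k) := by
            rw [Ideal.span_le]; rintro _ ⟨i, rfl⟩; simp [RingHom.mem_ker]
          exact hle hb
        rw [hx2]
        rw [show (coeff 0 b : k) = constantCoeff b from rfl, hb0, mul_zero]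
    · intro g h hg hh d hd
      rw [coeff_add, hg d hd, hh d hd, add_zero]

lemma homog_mem_pow {f : MvPolynomial (Fin r) k} {i N : ℕ}
    (hf : f.IsHomogeneous i) (hN : N ≤ i) :
    f ∈ (Ideal.span (Set.range X) : Ideal (MvPolynomial (Fin r) k)) ^ N := by
  rw [f.as_sum]
  apply Ideal.sum_mem
  intro d hd
  have hdeg : d.degree = i := by
    by_contra h
    exact (MvPolynomial.mem_support_iff.mp hd) (hf.coeff_eq_zero h)
  rw [monomial_eq]
  apply Ideal.mul_mem_left
  have key : ∀ s : Finset (Fin r),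
      (∏ j ∈ s, (X j : MvPolynomial (Fin r) k) ^ d j)
        ∈ (Ideal.span (Set.range X) : Ideal (MvPolynomial (Fin r) k)) ^ (∑ j ∈ s, d j) := by
    intro s
    classical
    induction s using Finset.induction with
    | empty => simp [Ideal.one_eq_top]
    | insert _ _ hns ih =>
      rw [Finset.prod_insert hns, Finset.sum_insert hns, pow_add]
      exact Ideal.mul_mem_mul
        (Ideal.pow_mem_pow (Ideal.subset_span (Set.mem_range_self _)) _) ih
  have h2 := key d.support
  rw [show ∑ j ∈ d.support, d j = d.degree from rfl, hdeg] at h2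
  exact Ideal.pow_le_pow_right hN (by simpa [Finsupp.prod] using h2)

lemma hilb_eq_of_iff (I I' : Ideal (MvPolynomial (Fin r) k)) (hII' : I ≤ I') (i : ℕ)
    (hiff : ∀ f ∈ homogeneousSubmodule (Fin r) k i, f ∈ I' → f ∈ I) :
    hilb k I' i = hilb k I i := by
  set φ : (MvPolynomial (Fin r) k ⧸ I) →ₐ[k] (MvPolynomial (Fin r) k ⧸ I') :=
    Ideal.Quotient.liftₐ I (Ideal.Quotient.mkₐ k I')
      (fun a ha => by
        rw [Ideal.Quotient.mkₐ_eq_mk, Ideal.Quotient.eq_zero_iff_mem]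
        exact hII' ha) with hφ
  have hφmk : ∀ f : MvPolynomial (Fin r) k,
      φ (Ideal.Quotient.mk I f) = Ideal.Quotient.mk I' f := by
    intro f
    rw [hφ, Ideal.Quotient.liftₐ_apply]
    rfl
  have hcomp : φ.toLinearMap ∘ₗ (Ideal.Quotient.mkₐ k I).toLinearMap
      = (Ideal.Quotient.mkₐ k I').toLinearMap := by
    apply LinearMap.ext
    intro f
    simpa [Ideal.Quotient.mkₐ_eq_mk] using hφmk f
  have hmap : quotPiece k I' i = (quotPiece k I i).map φ.toLinearMap := by
    rw [quotPiece, quotPiece, ← Submodule.map_comp, hcomp]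
  have hinj : ∀ x ∈ quotPiece k I i, φ x = 0 → x = 0 := by
    rintro x ⟨f, hf, rfl⟩ hx0
    show Ideal.Quotient.mkₐ k I f = 0
    rw [Ideal.Quotient.mkₐ_eq_mk, Ideal.Quotient.eq_zero_iff_mem]
    apply hiff f hf
    rw [← Ideal.Quotient.eq_zero_iff_mem, ← hφmk f]
    have h3 : (Ideal.Quotient.mkₐ k I).toLinearMap f = Ideal.Quotient.mk I f := by
      simp [Ideal.Quotient.mkₐ_eq_mk]
    rwa [h3] at hx0
  set ψ : quotPiece k I i →ₗ[k] quotPiece k I' i :=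
    (φ.toLinearMap.domRestrict (quotPiece k I i)).codRestrict _
      (fun x => hmap ▸ Submodule.mem_map_of_mem x.2) with hψ
  have hψval : ∀ x : quotPiece k I i, (ψ x : MvPolynomial (Fin r) k ⧸ I') = φ x.1 := by
    intro x; rfl
  have hbij : Function.Bijective ψ := by
    constructor
    · intro x y hxy
      have h1 : φ x.1 = φ y.1 := by rw [← hψval, ← hψval, hxy]
      have hsub : φ (x.1 - y.1) = 0 := by rw [map_sub, h1, sub_self]
      have := hinj _ (Submodule.sub_mem _ x.2 y.2) hsub
      exact Subtype.ext (by rwa [sub_eq_zero] at this)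
    · rintro ⟨y, hy⟩
      rw [hmap] at hy
      obtain ⟨x, hx, hxy⟩ := hy
      exact ⟨⟨x, hx⟩, Subtype.ext hxy⟩
  rw [hilb, hilb]
  exact ((LinearEquiv.ofBijective ψ hbij).finrank_eq).symm

lemma quotPiece_eq_bot (I : Ideal (MvPolynomial (Fin r) k)) (i : ℕ)
    (h : ∀ f ∈ homogeneousSubmodule (Fin r) k i, f ∈ I) :
    quotPiece k I i = ⊥ := by
  rw [eq_bot_iff]
  rintro x ⟨f, hf, rfl⟩
  show Ideal.Quotient.mkₐ k I f ∈ (⊥ : Submodule k _)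
  rw [Submodule.mem_bot, Ideal.Quotient.mkₐ_eq_mk, Ideal.Quotient.eq_zero_iff_mem]
  exact h f hf

lemma hilb_eq_zero_of_le (I : Ideal (MvPolynomial (Fin r) k)) (i : ℕ)
    (h : ∀ f ∈ homogeneousSubmodule (Fin r) k i, f ∈ I) :
    hilb k I i = 0 := by
  rw [hilb, quotPiece_eq_bot I i h, finrank_bot]

lemma mem_sup_homog_iff [CharZero k] (v : Fin 12 → (Fin 3 → k))
    {f : MvPolynomial (Fin 3) k} {i : ℕ} (hi : i < 6)
    (hf : f ∈ homogeneousSubmodule (Fin 3) k i)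
    (hfJ : f ∈ pointsIdeal k v ⊔ (Ideal.span (Set.range X)) ^ 6) :
    f ∈ pointsIdeal k v := by
  obtain ⟨a, ha, b, hb, rfl⟩ := Submodule.mem_sup.mp hfJ
  have hcompb : homogeneousComponent i b = 0 := by
    ext d
    rw [coeff_homogeneousComponent, coeff_zero]
    split_ifs with h
    · exact span_X_pow_coeff 6 b hb d (h ▸ hi)
    · rfl
  have hself : homogeneousComponent i (a + b) = a + b := by
    rw [homogeneousComponent_of_mem hf, if_pos rfl]
  have heq : a + b = homogeneousComponent i a := by
    rw [← hself, map_add, hcompb, add_zero]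
  rw [heq]
  exact pointsIdeal_homog v ha i

end Aux

/-- the algebra `A₁` in the proof of Proposition 9 i. Let
`Z ⊂ P²` be a reduced set of 12 distinct points whose coordinate ring
`R/I_Z` has Hilbert function `1, 3, 6, 10, 12, 12, 12, …`, and let
`I = I_Z + (x,y,z)^6`. Then `A = R/I` is artinian with Hilbert function
`1, 3, 6, 10, 12, 12, 0` and `A` enjoys the Weak Lefschetz Property. -/
theorem stmt14 (k : Type) [Field k] [CharZero k]
    (v : Fin 12 → (Fin 3 → k))
    (hnz : ∀ p : Fin 12, v p ≠ 0)
    (hdist : ∀ p q : Fin 12, p ≠ q → ∀ c : k, v p ≠ c • v q)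
    (hZ0 : hilb k (pointsIdeal k v) 0 = 1)
    (hZ1 : hilb k (pointsIdeal k v) 1 = 3)
    (hZ2 : hilb k (pointsIdeal k v) 2 = 6)
    (hZ3 : hilb k (pointsIdeal k v) 3 = 10)
    (hZge4 : ∀ i : ℕ, 4 ≤ i → hilb k (pointsIdeal k v) i = 12) :
    hilb k (pointsIdeal k v ⊔ (Ideal.span (Set.range X)) ^ 6) 0 = 1 ∧
    hilb k (pointsIdeal k v ⊔ (Ideal.span (Set.range X)) ^ 6) 1 = 3 ∧
    hilb k (pointsIdeal k v ⊔ (Ideal.span (Set.range X)) ^ 6) 2 = 6 ∧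
    hilb k (pointsIdeal k v ⊔ (Ideal.span (Set.range X)) ^ 6) 3 = 10 ∧
    hilb k (pointsIdeal k v ⊔ (Ideal.span (Set.range X)) ^ 6) 4 = 12 ∧
    hilb k (pointsIdeal k v ⊔ (Ideal.span (Set.range X)) ^ 6) 5 = 12 ∧
    (∀ i : ℕ, 6 ≤ i → hilb k (pointsIdeal k v ⊔ (Ideal.span (Set.range X)) ^ 6) i = 0) ∧
    WLP k (pointsIdeal k v ⊔ (Ideal.span (Set.range X)) ^ 6) := by
  set J : Ideal (MvPolynomial (Fin 3) k) :=
    pointsIdeal k v ⊔ (Ideal.span (Set.range X)) ^ 6 with hJ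
  have hle : pointsIdeal k v ≤ J := le_sup_left
  have heq : ∀ i : ℕ, i < 6 → hilb k J i = hilb k (pointsIdeal k v) i := by
    intro i hi
    exact hilb_eq_of_iff _ _ hle i (fun f hf hfJ => mem_sup_homog_iff v hi hf hfJ)
  have hzero : ∀ i : ℕ, 6 ≤ i → hilb k J i = 0 := by
    intro i hi
    apply hilb_eq_zero_of_le
    intro f hf
    exact Ideal.mem_sup_right (homog_mem_pow hf hi)
  refine ⟨by rw [heq 0 (by norm_num), hZ0], by rw [heq 1 (by norm_num), hZ1],
    by rw [heq 2 (by norm_num), hZ2], by rw [heq 3 (by norm_num), hZ3],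
    by rw [heq 4 (by norm_num), hZge4 4 le_rfl],
    by rw [heq 5 (by norm_num), hZge4 5 (by norm_num)], hzero, ?_⟩
  -- WLP
  obtain ⟨t, ht⟩ : ∃ t : k, ∀ p : Fin 12, v p 0 + t * v p 1 + t ^ 2 * v p 2 ≠ 0 := by
    set q : Fin 12 → Polynomial k := fun p =>
      Polynomial.C (v p 0) + Polynomial.C (v p 1) * Polynomial.X
        + Polynomial.C (v p 2) * Polynomial.X ^ 2 with hq
    have hqne : ∀ p, q p ≠ 0 := by
      intro p h0
      apply hnz p
      funext j
      fin_cases j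
      · simpa [hq] using congrArg (fun Q => Polynomial.coeff Q 0) h0
      · simpa [hq] using congrArg (fun Q => Polynomial.coeff Q 1) h0
      · simpa [hq] using congrArg (fun Q => Polynomial.coeff Q 2) h0
    have hprod : (∏ p, q p) ≠ 0 := Finset.prod_ne_zero_iff.mpr fun p _ => hqne p
    obtain ⟨t, ht⟩ : ∃ t : k, Polynomial.eval t (∏ p, q p) ≠ 0 := by
      by_contra h
      push_neg at h
      exact hprod (Polynomial.funext fun t => by simp [h t])
    refine ⟨t, fun p h0 => ?_⟩
    apply ht
    rw [Polynomial.eval_prod]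
    apply Finset.prod_eq_zero (Finset.mem_univ p)
    rw [hq]
    simp only [Polynomial.eval_add, Polynomial.eval_mul, Polynomial.eval_C,
      Polynomial.eval_X, Polynomial.eval_pow]
    linear_combination h0
  set L : MvPolynomial (Fin 3) k := X 0 + C t * X 1 + C (t ^ 2) * X 2 with hLdef
  have hL1 : L.IsHomogeneous 1 :=
    (((isHomogeneous_X k 0).add ((isHomogeneous_X k 1).C_mul t)).add
      ((isHomogeneous_X k 2).C_mul (t ^ 2)))
  have hevalL : ∀ w : Fin 3 → k, eval w L = w 0 + t * w 1 + t ^ 2 * w 2 := by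
    intro w
    rw [hLdef]
    simp
  refine ⟨L, hL1, ?_⟩
  intro i
  by_cases hi : i ≤ 4
  · left
    rintro x ⟨f, hf, rfl⟩ hLf
    have hmk : (Ideal.Quotient.mkₐ k J).toLinearMap f = Ideal.Quotient.mk J f := rfl
    rw [hmk] at hLf ⊢
    have hLfJ : L * f ∈ J := by
      rw [← Ideal.Quotient.eq_zero_iff_mem, map_mul]
      exact hLf
    have hLfI : L * f ∈ pointsIdeal k v := by
      refine mem_sup_homog_iff v (i := 1 + i) (by omega) ?_ hLfJ
      exact hL1.mul hf
    rw [Ideal.Quotient.eq_zero_iff_mem]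
    apply hle
    rw [mem_pointsIdeal_iff]
    intro p c
    have hne : ∀ c' : k, c' ≠ 0 → eval (c' • v p) f = 0 := by
      intro c' hc'
      have h0 : eval (c' • v p) (L * f) = 0 := mem_pointsIdeal_iff.mp hLfI p c'
      rw [map_mul] at h0
      have hLc : eval (c' • v p) L = c' * eval (v p) L := by
        rw [aux_eval_smul hL1, pow_one]
      have hLvp : eval (v p) L ≠ 0 := by rw [hevalL]; exact ht p
      rw [hLc] at h0
      rcases mul_eq_zero.mp h0 with h | h
      · exact absurd h (mul_ne_zero hc' hLvp)
      · exact h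
    obtain ⟨Q, hQe, hQc⟩ := aux_exists_poly (v p) f
    have hQ : Q = 0 := by
      apply Polynomial.eq_zero_of_infinite_isRoot
      apply Set.Infinite.mono (s := {c : k | c ≠ 0})
      · intro c' hc'
        show Q.IsRoot c'
        rw [Polynomial.IsRoot, hQe]
        exact hne c' hc'
      · exact Set.Finite.infinite_compl (Set.finite_singleton 0)
    have := hQe c
    rw [hQ, Polynomial.eval_zero] at this
    exact this.symm
  · right
    intro y hy
    have hbot : quotPiece k J (i + 1) = ⊥ := by
      apply quotPiece_eq_bot
      intro f hf
      exact Ideal.mem_sup_right (homog_mem_pow hf (by omega))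
    rw [hbot, Submodule.mem_bot] at hy
    exact ⟨0, Submodule.zero_mem _, by rw [mul_zero, hy]⟩
end

section
/- Let R = k[x_1,…,x_r] be a standard graded polynomial ring over a field k of characteristic zero, let A = R/I be an artinian standard graded algebra with Hilbert function h_i = dim_k A_i, and let t be the smallest integer such that h_t ≤ t. Suppose that for all i = 1, …, t−1 one has h_{i−1} = ((h_i)_{(i)})^{−1}_{−1}. Then for every linear form L ∈ R_1 satisfying the conclusion of Green's theorem (i.e., dim_k (R/(I+(L)))_d ≤ (h_d)_{<d>} for all d ≥ 1), one has dim_k (R/(I+(L)))_i = h_i − h_{i−1} for all 1 ≤ i ≤ t−1 and dim_k (R/(I+(L)))_i = 0 for all i ≥ t. -/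
open MvPolynomial Finset

set_option maxHeartbeats 1000000
set_option synthInstance.maxHeartbeats 1000000

section Aux

variable {k : Type} [Field k] {r : ℕ}

instance fdHomog (n : ℕ) : FiniteDimensional k (homogeneousSubmodule (Fin r) k n) :=
  Submodule.finiteDimensional_of_le (S₂ := restrictTotalDegree (Fin r) k n)
    (fun _ hp => (mem_restrictTotalDegree _ _ _).mpr (IsHomogeneous.totalDegree_le hp))

instance fdQuotPiece (I : Ideal (MvPolynomial (Fin r) k)) (n : ℕ) :
    FiniteDimensional k (quotPiece k I n) := by
  unfold quotPiece
  infer_instance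

lemma homogComp_linear_mul {L p : MvPolynomial (Fin r) k}
    (hL : L ∈ homogeneousSubmodule (Fin r) k 1) (i : ℕ) (hi : 1 ≤ i) :
    homogeneousComponent i (L * p) = L * homogeneousComponent (i - 1) p := by
  conv_lhs => rw [← sum_homogeneousComponent p, Finset.mul_sum, map_sum]
  have key : ∀ m : ℕ, homogeneousComponent i (L * homogeneousComponent m p) =
      if m = i - 1 then L * homogeneousComponent m p else 0 := by
    intro m
    have hmem : L * homogeneousComponent m p ∈ homogeneousSubmodule (Fin r) k (1 + m) :=
      IsHomogeneous.mul hL (homogeneousComponent_mem m p)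
    rw [homogeneousComponent_of_mem hmem]
    have hiff : (i = 1 + m) ↔ (m = i - 1) := by omega
    rw [if_congr hiff rfl rfl]
  simp_rw [key]
  rw [Finset.sum_ite_eq' (Finset.range (p.totalDegree + 1)) (i-1)
    (fun m => L * homogeneousComponent m p)]
  split_ifs with h
  · rfl
  · rw [Finset.mem_range, not_lt] at h
    rw [homogeneousComponent_eq_zero _ p (by omega), mul_zero]

/-- The natural `k`-linear map `R/I → R/J` when `I ≤ J`. -/
noncomputable def qmap (I J : Ideal (MvPolynomial (Fin r) k)) (hIJ : I ≤ J) :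
    (MvPolynomial (Fin r) k ⧸ I) →ₗ[k] (MvPolynomial (Fin r) k ⧸ J) :=
  (Ideal.Quotient.liftₐ I (Ideal.Quotient.mkₐ k J)
    (fun a ha => by
      rw [Ideal.Quotient.mkₐ_eq_mk]
      exact (Ideal.Quotient.eq_zero_iff_mem).mpr (hIJ ha))).toLinearMap

lemma qmap_comp_mk (I J : Ideal (MvPolynomial (Fin r) k)) (hIJ : I ≤ J) :
    (qmap I J hIJ) ∘ₗ (Ideal.Quotient.mkₐ k I).toLinearMap
      = (Ideal.Quotient.mkₐ k J).toLinearMap := by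
  ext f
  simp [qmap]
  exact Ideal.Quotient.lift_mk _ _ _

lemma quotPiece_map (I J : Ideal (MvPolynomial (Fin r) k)) (hIJ : I ≤ J) (n : ℕ) :
    (quotPiece k I n).map (qmap I J hIJ) = quotPiece k J n := by
  rw [quotPiece, quotPiece, ← Submodule.map_comp, qmap_comp_mk]

lemma hilb_mono (I J : Ideal (MvPolynomial (Fin r) k)) (hIJ : I ≤ J) (n : ℕ) :
    hilb k J n ≤ hilb k I n := by
  rw [hilb, hilb, ← quotPiece_map I J hIJ]
  exact Submodule.finrank_map_le _ _

/-- The key lower bound `h_i ≤ g_i + h_{i-1}`. -/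
lemma hilb_lower (I : Ideal (MvPolynomial (Fin r) k)) (hIhom : IsHomogIdeal I)
    {L : MvPolynomial (Fin r) k} (hL : L ∈ homogeneousSubmodule (Fin r) k 1)
    (i : ℕ) (hi : 1 ≤ i) :
    hilb k I i ≤ hilb k (I ⊔ Ideal.span {L}) i + hilb k I (i-1) := by
  set J := I ⊔ Ideal.span {L} with hJ
  have hIJ : I ≤ J := le_sup_left
  set φ := qmap I J hIJ with hφ
  set ψ : (quotPiece k I i) →ₗ[k] (MvPolynomial (Fin r) k ⧸ J) :=
    φ ∘ₗ (quotPiece k I i).subtype with hψ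
  have hrange : LinearMap.range ψ = quotPiece k J i := by
    rw [hψ, LinearMap.range_comp, Submodule.range_subtype, quotPiece_map]
  have hrn := LinearMap.finrank_range_add_finrank_ker ψ
  rw [hrange] at hrn
  have hker : (LinearMap.ker ψ).map (quotPiece k I i).subtype ≤
      (quotPiece k I (i-1)).map (LinearMap.mulLeft k (Ideal.Quotient.mk I L)) := by
    rintro x ⟨y, hy, rfl⟩
    obtain ⟨f, hf, hfy⟩ := y.2
    have hfJ : f ∈ J := by
      have : ψ y = 0 := hy
      rw [hψ] at this
      simp only [LinearMap.comp_apply, Submodule.subtype_apply] at this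
      rw [← hfy] at this
      have : Ideal.Quotient.mk J f = 0 := by
        have h2 : φ ((Ideal.Quotient.mkₐ k I).toLinearMap f)
            = (Ideal.Quotient.mkₐ k J).toLinearMap f := by
          rw [← LinearMap.comp_apply, qmap_comp_mk]
        simp only [AlgHom.toLinearMap_apply, Ideal.Quotient.mkₐ_eq_mk] at h2
        rw [← h2]
        exact this
      exact (Ideal.Quotient.eq_zero_iff_mem).mp this
    rw [hJ] at hfJ
    obtain ⟨g, hg, l, hl, hglf⟩ := Submodule.mem_sup.mp hfJ
    obtain ⟨p, hp⟩ := Ideal.mem_span_singleton'.mp hl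
    have hfdecomp : f = homogeneousComponent i g + L * homogeneousComponent (i-1) p := by
      have h1 : homogeneousComponent i f = f := by
        rw [homogeneousComponent_of_mem hf, if_pos rfl]
      have h2 : f = g + L * p := by rw [← hglf, ← hp, mul_comm]
      rw [← h1, h2, map_add, homogComp_linear_mul hL i hi]
    refine ⟨Ideal.Quotient.mk I (homogeneousComponent (i-1) p),
      ⟨homogeneousComponent (i-1) p, homogeneousComponent_mem _ _, rfl⟩, ?_⟩
    have hmkg : Ideal.Quotient.mk I (homogeneousComponent i g) = 0 :=
      (Ideal.Quotient.eq_zero_iff_mem).mpr (hIhom g hg i)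
    rw [LinearMap.mulLeft_apply, ← map_mul, Submodule.subtype_apply, ← hfy,
      AlgHom.toLinearMap_apply, Ideal.Quotient.mkₐ_eq_mk]
    conv_rhs => rw [hfdecomp]
    rw [map_add, hmkg, zero_add]
  have h1 : Module.finrank k (LinearMap.ker ψ)
      = Module.finrank k ((LinearMap.ker ψ).map (quotPiece k I i).subtype) :=
    (Submodule.finrank_map_subtype_eq _ _).symm
  have h2 : Module.finrank k ((LinearMap.ker ψ).map (quotPiece k I i).subtype)
      ≤ Module.finrank k
        ((quotPiece k I (i-1)).map (LinearMap.mulLeft k (Ideal.Quotient.mk I L))) :=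
    Submodule.finrank_mono hker
  have h3 : Module.finrank k
      ((quotPiece k I (i-1)).map (LinearMap.mulLeft k (Ideal.Quotient.mk I L)))
      ≤ Module.finrank k (quotPiece k I (i-1)) := Submodule.finrank_map_le _ _
  have hrn' : hilb k J i + Module.finrank k (LinearMap.ker ψ) = hilb k I i := hrn
  have h4 : Module.finrank k (quotPiece k I (i-1)) = hilb k I (i-1) := rfl
  have hgoal : hilb k I i ≤ hilb k J i + hilb k I (i-1) := by omega
  exact hgoal

lemma homog_le_succ (J : Ideal (MvPolynomial (Fin r) k)) (n : ℕ)
    (h : ∀ f ∈ homogeneousSubmodule (Fin r) k n, f ∈ J) :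
    ∀ f ∈ homogeneousSubmodule (Fin r) k (n+1), f ∈ J := by
  intro f hf
  rw [as_sum f]
  apply Ideal.sum_mem
  intro s hs
  have hco : coeff s f ≠ 0 := mem_support_iff.mp hs
  have hdeg : s.degree = n + 1 := by
    rw [Finsupp.degree_eq_weight_one]
    exact hf hco
  have hs0 : s ≠ 0 := by
    intro h0
    rw [h0] at hdeg
    simp [Finsupp.degree] at hdeg
  obtain ⟨v, hv⟩ := Finsupp.ne_iff.mp hs0
  simp only [Finsupp.coe_zero, Pi.zero_apply] at hv
  have hle : Finsupp.single v 1 ≤ s := by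
    rw [Finsupp.single_le_iff]
    omega
  have hdeg' : (s - Finsupp.single v 1).degree = n := by
    have hadd : Finsupp.single v 1 + (s - Finsupp.single v 1) = s :=
      add_tsub_cancel_of_le hle
    rw [← hadd, Finsupp.degree_eq_weight_one, map_add] at hdeg
    have h1 : (Finsupp.weight (fun _ => 1)) (Finsupp.single v (1:ℕ)) = 1 := by
      simp [Finsupp.weight_apply, Finsupp.sum_single_index]
    rw [h1, ← Finsupp.degree_eq_weight_one] at hdeg
    omega
  have hfac : (monomial s) (coeff s f)
      = X v * (monomial (s - Finsupp.single v 1)) (coeff s f) := by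
    rw [X, monomial_mul, one_mul, add_tsub_cancel_of_le hle]
  rw [hfac]
  exact Ideal.mul_mem_left _ _ (h _ (isHomogeneous_monomial _ hdeg'))

lemma homog_le_of_le (J : Ideal (MvPolynomial (Fin r) k)) (t : ℕ)
    (h : ∀ f ∈ homogeneousSubmodule (Fin r) k t, f ∈ J) :
    ∀ i, t ≤ i → ∀ f ∈ homogeneousSubmodule (Fin r) k i, f ∈ J := by
  intro i hti
  induction i, hti using Nat.le_induction with
  | base => exact h
  | succ n hn ih => exact homog_le_succ J n ih

lemma hilb_zero_iff (J : Ideal (MvPolynomial (Fin r) k)) (n : ℕ) :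
    hilb k J n = 0 ↔ ∀ f ∈ homogeneousSubmodule (Fin r) k n, f ∈ J := by
  constructor
  · intro h0 f hf
    have hbot : quotPiece k J n = ⊥ := Submodule.finrank_eq_zero.mp h0
    have hmem : (Ideal.Quotient.mkₐ k J).toLinearMap f ∈ quotPiece k J n := ⟨f, hf, rfl⟩
    rw [hbot, Submodule.mem_bot] at hmem
    simpa using (Ideal.Quotient.eq_zero_iff_mem).mp (by simpa using hmem)
  · intro h
    have hbot : quotPiece k J n = ⊥ := by
      rw [eq_bot_iff]
      rintro x ⟨f, hf, rfl⟩
      simpa using (Ideal.Quotient.eq_zero_iff_mem).mpr (h f hf)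
    rw [hilb, hbot]
    simp

end Aux

/-- the computation in the proof of Theorem 5. Let `A = R/I`
be artinian over a field of characteristic zero, `t` the smallest integer with
`h_t ≤ t`, and suppose `h_{i−1} = ((h_i)_{(i)})^{−1}_{−1}` for `i = 1, …, t−1`.
Then for every linear form `L` satisfying the conclusion of Green's theorem
(`dim_k (R/(I+(L)))_d ≤ (h_d)_{<d>}` for all `d ≥ 1`), one has
`dim_k (R/(I+(L)))_i = h_i − h_{i−1}` for `1 ≤ i ≤ t−1` and
`dim_k (R/(I+(L)))_i = 0` for `i ≥ t`. -/
theorem stmt15 (k : Type) [Field k] [CharZero k] (r : ℕ)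
    (I : Ideal (MvPolynomial (Fin r) k)) (hIhom : IsHomogIdeal I)
    (hart : ArtinianQuot k I)
    (t : ℕ) (hht : hilb k I t ≤ t) (htmin : ∀ s : ℕ, s < t → s < hilb k I s)
    (hcond : ∀ i : ℕ, 1 ≤ i → i < t →
      ∃ (j : ℕ) (c : ℕ → ℕ), IsBinExp (hilb k I i) i j c ∧
        hilb k I (i - 1) = ∑ m ∈ Finset.Icc j i, (c m - 1).choose (m - 1))
    (L : MvPolynomial (Fin r) k) (hL : L ∈ homogeneousSubmodule (Fin r) k 1)
    (hGreen : ∀ d : ℕ, 1 ≤ d → ∀ (j : ℕ) (c : ℕ → ℕ), IsBinExp (hilb k I d) d j c →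
      hilb k (I ⊔ Ideal.span {L}) d ≤ ∑ m ∈ Finset.Icc j d, (c m - 1).choose m) :
    (∀ i : ℕ, 1 ≤ i → i < t →
      hilb k (I ⊔ Ideal.span {L}) i = hilb k I i - hilb k I (i - 1)) ∧
    (∀ i : ℕ, t ≤ i → hilb k (I ⊔ Ideal.span {L}) i = 0) := by
  set J := I ⊔ Ideal.span {L} with hJdef
  have hIJ : I ≤ J := le_sup_left
  constructor
  · -- part 1
    intro i hi hit
    obtain ⟨j, c, hbe, hprev⟩ := hcond i hi hit
    obtain ⟨hj1, hji, hjcj, hmono, hsum⟩ := hbe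
    have green := hGreen i hi j c ⟨hj1, hji, hjcj, hmono, hsum⟩
    have pascal : hilb k I i = (∑ m ∈ Finset.Icc j i, (c m - 1).choose m)
        + hilb k I (i-1) := by
      rw [hsum, hprev, ← Finset.sum_add_distrib]
      apply Finset.sum_congr rfl
      intro m hm
      rw [Finset.mem_Icc] at hm
      have hm1 : 1 ≤ m := le_trans hj1 hm.1
      have hcm : 1 ≤ c m := by
        rcases eq_or_lt_of_le hm.1 with h | h
        · rw [← h]; omega
        · have := hmono ⟨le_refl j, hji⟩ ⟨hm.1, hm.2⟩ h
          omega
      obtain ⟨a, ha⟩ := Nat.exists_eq_succ_of_ne_zero (by omega : c m ≠ 0)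
      obtain ⟨b, hb⟩ := Nat.exists_eq_succ_of_ne_zero (by omega : m ≠ 0)
      rw [ha, hb]
      simp only [Nat.succ_sub_one, Nat.add_sub_cancel]
      rw [Nat.choose_succ_succ]
      exact Nat.add_comm _ _
    have lower := hilb_lower I hIhom hL i hi
    rw [← hJdef] at lower
    omega
  · -- part 2
    have hJt : hilb k J t = 0 := by
      rcases Nat.eq_zero_or_pos t with ht0 | ht1
      · subst ht0
        have : hilb k I 0 = 0 := Nat.le_zero.mp hht
        have := hilb_mono I J hIJ 0
        omega
      · rcases Nat.eq_zero_or_pos (hilb k I t) with hh0 | hh1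
        · have := hilb_mono I J hIJ t
          omega
        · set n := hilb k I t with hn
          set j := t + 1 - n with hj
          have hbe : IsBinExp n t j (fun m => m) := by
            refine ⟨by omega, by omega, le_refl _, fun a _ b _ hab => hab, ?_⟩
            rw [Finset.sum_congr rfl (fun m _ => Nat.choose_self m), Finset.sum_const,
              Nat.card_Icc, smul_eq_mul, mul_one]
            omega
          have green := hGreen t ht1 j (fun m => m) hbe
          have hzero : ∑ m ∈ Finset.Icc j t, (m - 1).choose m = 0 := by
            apply Finset.sum_eq_zero
            intro m hm
            rw [Finset.mem_Icc] at hm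
            exact Nat.choose_eq_zero_of_lt (by omega)
          rw [hzero] at green
          omega
    intro i hti
    rw [hilb_zero_iff]
    exact homog_le_of_le J t ((hilb_zero_iff J t).mp hJt) i hti
end
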